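/- arXiv:2303.12555 — 11 statements merged into one kernel-verified Lean document; each statement's English description precedes it below -/
import Mathlib

section
/- Let X, Y1, Y2 be Hilbert spaces, F : X → Y1' and T : X → Y2' bounded linear operators, X0 := ker T. If F restricted to X0 is boundedly invertible onto Y1' and T is surjective, then the combined operator G := (F, T) : X → Y1' × Y2' is boundedly invertible. -/
open NormedSpace

/-- If `F` restricted to `ker T` is boundedly invertible onto `Y1'` and `T` is surjective,
then `G := (F, T) : X → Y1' × Y2'` is boundedly invertible. -/
theorem combined_operator_boundedly_invertible
    {X Y1 Y2 : Type*}
    [NormedAddCommGroup X] [InnerProductSpace ℝ X] [CompleteSpace X]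
    [NormedAddCommGroup Y1] [InnerProductSpace ℝ Y1] [CompleteSpace Y1]
    [NormedAddCommGroup Y2] [InnerProductSpace ℝ Y2] [CompleteSpace Y2]
    (F : X →L[ℝ] StrongDual ℝ Y1) (T : X →L[ℝ] StrongDual ℝ Y2)
    (F0 : ↥(LinearMap.ker (T : X →ₗ[ℝ] StrongDual ℝ Y2)) ≃L[ℝ] StrongDual ℝ Y1)
    (hF0 : ∀ x : ↥(LinearMap.ker (T : X →ₗ[ℝ] StrongDual ℝ Y2)), F0 x = F (x : X))
    (hT : Function.Surjective T) :
    ∃ G : X ≃L[ℝ] (StrongDual ℝ Y1 × StrongDual ℝ Y2),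
      (G : X →L[ℝ] (StrongDual ℝ Y1 × StrongDual ℝ Y2)) = F.prod T := by
  have hker : LinearMap.ker (F.prod T : X →ₗ[ℝ] StrongDual ℝ Y1 × StrongDual ℝ Y2) = ⊥ := by
    rw [LinearMap.ker_eq_bot']
    intro x hx
    have h1 : F x = 0 := congrArg Prod.fst hx
    have h2 : T x = 0 := congrArg Prod.snd hx
    have hxm : x ∈ LinearMap.ker (T : X →ₗ[ℝ] StrongDual ℝ Y2) := h2
    have : F0 ⟨x, hxm⟩ = 0 := by rw [hF0]; exact h1
    have h0 : (⟨x, hxm⟩ : ↥(LinearMap.ker (T : X →ₗ[ℝ] StrongDual ℝ Y2))) = 0 := F0.injective (by rw [this, map_zero])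
    exact congrArg Subtype.val h0
  have hrange : LinearMap.range (F.prod T : X →ₗ[ℝ] StrongDual ℝ Y1 × StrongDual ℝ Y2) = ⊤ := by
    rw [LinearMap.range_eq_top]
    rintro ⟨f, g⟩
    obtain ⟨x1, hx1⟩ := hT g
    set x0 : ↥(LinearMap.ker (T : X →ₗ[ℝ] StrongDual ℝ Y2)) := F0.symm (f - F x1)
    refine ⟨(x0 : X) + x1, ?_⟩
    have hFx0 : F (x0 : X) = f - F x1 := by
      rw [← hF0]; simp [x0]
    have hTx0 : T (x0 : X) = 0 := x0.2
    simp only [ContinuousLinearMap.prod_apply, map_add, hFx0, hTx0, hx1, zero_add]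
    simp [hFx0, hx1]
  exact ⟨ContinuousLinearEquiv.ofBijective (F.prod T) hker hrange, rfl⟩
end

section
/- Let G ∈ Lis(X, Y') between Hilbert spaces, f ∈ Y', u = G⁻¹ f, and X^δ, Y^δ closed nonzero proper subspaces of X and Y respectively. Define γ^δ := inf over nonzero w ∈ X^δ of [sup over nonzero v ∈ Y^δ of |(G w)(v)|/‖v‖_Y] / ‖G w‖_{Y'}, and assume γ^δ > 0. Let u^δ minimize over w ∈ X^δ the discretized residual (1/2) sup over nonzero v ∈ Y^δ of |(G w − f)(v)|² / ‖v‖_Y². Then with |||·|||_X := ‖G ·‖_{Y'}, it holds that |||u − u^δ|||_X ≤ (1/γ^δ) · inf over w ∈ X^δ of |||u − w|||_X. -/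
open NormedSpace
open scoped RealInnerProductSpace

section Aux
variable {E : Type*} [NormedAddCommGroup E] [InnerProductSpace ℝ E]

lemma minres_sup_abs_inner_div (K : Submodule ℝ E) [K.HasOrthogonalProjection]
    [Nonempty {v : K // (v : E) ≠ 0}] (g : E) :
    (⨆ v : {v : K // (v : E) ≠ 0}, |⟪g, (((v : K)) : E)⟫| / ‖(((v : K)) : E)‖)
      = ‖(K.orthogonalProjection g : E)‖ := by
  set p := (K.orthogonalProjection g : E) with hp
  have hinner : ∀ v : E, v ∈ K → ⟪g, v⟫ = ⟪p, v⟫ := by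
    intro v hv
    have h0 : ⟪g - p, v⟫ = 0 := Submodule.starProjection_inner_eq_zero g v hv
    rw [inner_sub_left] at h0
    linarith
  have hub : ∀ v : {v : K // (v : E) ≠ 0},
      |⟪g, (((v : K)) : E)⟫| / ‖(((v : K)) : E)‖ ≤ ‖p‖ := by
    intro v
    rw [hinner _ (v : K).2, div_le_iff₀ (norm_pos_iff.mpr v.2)]
    exact abs_real_inner_le_norm _ _
  apply le_antisymm (ciSup_le hub)
  rcases eq_or_ne p 0 with h | h
  · rw [h, norm_zero]
    exact Real.iSup_nonneg fun v => div_nonneg (abs_nonneg _) (norm_nonneg _)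
  · have hmem : p ∈ K := (K.orthogonalProjection g).2
    have hpn : ‖p‖ ≠ 0 := norm_ne_zero_iff.mpr h
    have hle := le_ciSup (⟨‖p‖, Set.forall_mem_range.mpr hub⟩ : BddAbove _)
      (⟨⟨p, hmem⟩, h⟩ : {v : K // (v : E) ≠ 0})
    simp only [hinner p hmem, real_inner_self_eq_norm_sq] at hle
    rwa [abs_of_nonneg (by positivity), sq, mul_div_assoc, div_self hpn, mul_one] at hle

lemma minres_sup_sq_inner_div (K : Submodule ℝ E) [K.HasOrthogonalProjection]
    [Nonempty {v : K // (v : E) ≠ 0}] (g : E) :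
    (⨆ v : {v : K // (v : E) ≠ 0}, |⟪g, (((v : K)) : E)⟫| ^ 2 / ‖(((v : K)) : E)‖ ^ 2)
      = ‖(K.orthogonalProjection g : E)‖ ^ 2 := by
  set p := (K.orthogonalProjection g : E) with hp
  have hinner : ∀ v : E, v ∈ K → ⟪g, v⟫ = ⟪p, v⟫ := by
    intro v hv
    have h0 : ⟪g - p, v⟫ = 0 := Submodule.starProjection_inner_eq_zero g v hv
    rw [inner_sub_left] at h0
    linarith
  have hub : ∀ v : {v : K // (v : E) ≠ 0},
      |⟪g, (((v : K)) : E)⟫| ^ 2 / ‖(((v : K)) : E)‖ ^ 2 ≤ ‖p‖ ^ 2 := by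
    intro v
    rw [hinner _ (v : K).2, div_le_iff₀ (pow_pos (norm_pos_iff.mpr v.2) 2)]
    have h1 := abs_real_inner_le_norm p (((v : K)) : E)
    nlinarith [abs_nonneg ⟪p, (((v : K)) : E)⟫, norm_nonneg p, norm_nonneg (((v : K)) : E)]
  apply le_antisymm (ciSup_le hub)
  rcases eq_or_ne p 0 with h | h
  · rw [h, norm_zero]
    simpa using Real.iSup_nonneg fun v : {v : K // (v : E) ≠ 0} =>
      div_nonneg (by positivity) (by positivity)
  · have hmem : p ∈ K := (K.orthogonalProjection g).2
    have hpn : ‖p‖ ≠ 0 := norm_ne_zero_iff.mpr h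
    have hle := le_ciSup (⟨‖p‖ ^ 2, Set.forall_mem_range.mpr hub⟩ : BddAbove _)
      (⟨⟨p, hmem⟩, h⟩ : {v : K // (v : E) ≠ 0})
    simp only [hinner p hmem, real_inner_self_eq_norm_sq] at hle
    have heq : |‖p‖ ^ 2| ^ 2 / ‖p‖ ^ 2 = ‖p‖ ^ 2 := by
      rw [abs_of_nonneg (by positivity), div_eq_iff (by positivity)]; ring
    rwa [heq] at hle

lemma minres_core_arith (g a b c e N : ℝ) (hg0 : 0 < g) (hg1 : g ≤ 1) (hb : 0 ≤ b) (he : 0 ≤ e)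
    (hc : g^2*(c^2+e^2) ≤ c^2) (hN : a^2+b^2+c^2+e^2 - 2*(b*e) ≤ N) :
    g^2*(a^2+b^2) ≤ N := by
  rcases lt_or_ge (g^2) 1 with h | h
  · have hP : 0 ≤ (1-g^2)*((1-g^2)*(a^2+b^2)+c^2+e^2-2*(b*e)) := by
      nlinarith [sq_nonneg ((1-g^2)*b - e), sq_nonneg ((1-g^2)*a)]
    have hP2 : 0 ≤ (1-g^2)*(a^2+b^2)+c^2+e^2-2*(b*e) := by
      by_contra hcon
      push_neg at hcon
      nlinarith
    nlinarith
  · have hg2 : g^2 = 1 := le_antisymm (by nlinarith) h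
    have he0 : e = 0 := by nlinarith [sq_nonneg e, sq_nonneg c]
    rw [hg2]
    nlinarith [sq_nonneg c, sq_nonneg e]

end Aux

set_option maxHeartbeats 1000000 in
/-- Quasi-optimality of the minimal residual approximation with discretized dual norm
(Theorem 3.3 form, stated as the bound `|||u − u^δ|||_X ≤ (1/γ^δ) inf_{w ∈ X^δ} |||u − w|||_X`). -/
theorem minres_quasi_optimality
    {X Y : Type*}
    [NormedAddCommGroup X] [InnerProductSpace ℝ X] [CompleteSpace X]
    [NormedAddCommGroup Y] [InnerProductSpace ℝ Y] [CompleteSpace Y]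
    (G : X ≃L[ℝ] StrongDual ℝ Y) (f : StrongDual ℝ Y) (u : X) (hu : G u = f)
    (Xd : Submodule ℝ X) (Yd : Submodule ℝ Y)
    (hXdclosed : IsClosed (Xd : Set X)) (hYdclosed : IsClosed (Yd : Set Y))
    (hXdbot : Xd ≠ ⊥) (hXdtop : Xd ≠ ⊤) (hYdbot : Yd ≠ ⊥) (hYdtop : Yd ≠ ⊤)
    (γd : ℝ)
    (hγdef : γd = ⨅ w : {w : Xd // (w : X) ≠ 0},
        (⨆ v : {v : Yd // (v : Y) ≠ 0},
          |G ((w : Xd) : X) ((v : Yd) : Y)| / ‖((v : Yd) : Y)‖) / ‖G ((w : Xd) : X)‖)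
    (hγpos : 0 < γd)
    (ud : Xd)
    (hud : ∀ w : Xd,
      (1/2) * ⨆ v : {v : Yd // (v : Y) ≠ 0},
          |(G ((ud : Xd) : X) - f) ((v : Yd) : Y)| ^ 2 / ‖((v : Yd) : Y)‖ ^ 2
      ≤ (1/2) * ⨆ v : {v : Yd // (v : Y) ≠ 0},
          |(G ((w : Xd) : X) - f) ((v : Yd) : Y)| ^ 2 / ‖((v : Yd) : Y)‖ ^ 2) :
    ‖G (u - (ud : X))‖ ≤ (1 / γd) * ⨅ w : Xd, ‖G (u - (w : X))‖ := by
  haveI : CompleteSpace Yd := hYdclosed.completeSpace_coe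
  obtain ⟨y0, hy0K, hy0⟩ := Submodule.exists_mem_ne_zero_of_ne_bot hYdbot
  haveI hYne : Nonempty {v : Yd // (v : Y) ≠ 0} :=
    ⟨⟨⟨y0, hy0K⟩, by simpa using hy0⟩⟩
  obtain ⟨x0, hx0K, hx0⟩ := Submodule.exists_mem_ne_zero_of_ne_bot hXdbot
  -- the Riesz representative map
  set T : X → Y := fun x => (InnerProductSpace.toDual ℝ Y).symm (G x) with hT
  have hTnorm : ∀ x, ‖T x‖ = ‖G x‖ := fun x => LinearIsometryEquiv.norm_map _ _
  have hpair : ∀ (x : X) (v : Y), (G x) v = ⟪T x, v⟫ := fun x v =>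
    (InnerProductSpace.toDual_symm_apply).symm
  have hTsub : ∀ x x', T (x - x') = T x - T x' := by
    intro x x'; simp only [hT, map_sub]
  have hTzero : T 0 = 0 := by simp only [hT, map_zero]
  have hTne : ∀ x : X, x ≠ 0 → T x ≠ 0 := by
    intro x hx hc
    rw [hT] at hc
    have h1 : G x = 0 := by
      simpa using congrArg (InnerProductSpace.toDual ℝ Y) hc
    exact hx (G.map_eq_zero_iff.mp h1)
  -- abbreviation for the projection
  set P : Y → Y := fun g => (Yd.orthogonalProjection g : Y) with hP
  have hPadd : ∀ g h : Y, P (g + h) = P g + P h := by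
    intro g h; simp only [hP, map_add, Submodule.coe_add]
  have hPsmul : ∀ (t : ℝ) (g : Y), P (t • g) = t • P g := by
    intro t g; simp only [hP, map_smul, Submodule.coe_smul]
  have hPneg : ∀ g : Y, P (-g) = - P g := by
    intro g; simp only [hP, map_neg, Submodule.coe_neg]
  have hPmem : ∀ g : Y, P g ∈ Yd := fun g => (Yd.orthogonalProjection g).2
  have hPorth : ∀ g : Y, g - P g ∈ Ydᗮ := fun g => Submodule.sub_starProjection_mem_orthogonal g
  -- Pythagoras for the projection
  have hPyth : ∀ g : Y, ‖g‖ ^ 2 = ‖P g‖ ^ 2 + ‖g - P g‖ ^ 2 := by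
    intro g
    have h0 : ⟪P g, g - P g⟫ = 0 :=
      (Submodule.mem_orthogonal Yd _).mp (hPorth g) _ (hPmem g)
    have : ‖P g + (g - P g)‖ ^ 2 = ‖P g‖ ^ 2 + 2 * ⟪P g, g - P g⟫ + ‖g - P g‖ ^ 2 :=
      norm_add_sq_real _ _
    rw [h0] at this
    simpa using this
  have hPle : ∀ g : Y, ‖P g‖ ≤ ‖g‖ := by
    intro g
    have := hPyth g
    nlinarith [norm_nonneg (P g), norm_nonneg g, sq_nonneg (‖g - P g‖)]
  -- rewrite the sups
  have hsup1 : ∀ x : X,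
      (⨆ v : {v : Yd // (v : Y) ≠ 0}, |G x ((v : Yd) : Y)| / ‖((v : Yd) : Y)‖)
        = ‖P (T x)‖ := by
    intro x
    rw [← minres_sup_abs_inner_div Yd (T x)]
    exact iSup_congr fun v => by rw [hpair]
  have hpair2 : ∀ (x : X) (v : Y), (G x - f) v = ⟪T x - T u, v⟫ := by
    intro x v
    rw [← hu, inner_sub_left, ← hpair, ← hpair]
    simp
  have hsup2 : ∀ x : X,
      (⨆ v : {v : Yd // (v : Y) ≠ 0},
        |(G x - f) ((v : Yd) : Y)| ^ 2 / ‖((v : Yd) : Y)‖ ^ 2)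
        = ‖P (T x - T u)‖ ^ 2 := by
    intro x
    rw [← minres_sup_sq_inner_div Yd (T x - T u)]
    exact iSup_congr fun v => by rw [hpair2]
  -- inf-sup lower bound
  have hγle : ∀ x : X, x ∈ Xd → γd * ‖T x‖ ≤ ‖P (T x)‖ := by
    intro x hx
    rcases eq_or_ne x 0 with h | h
    · rw [h, hTzero, norm_zero, mul_zero]
      exact norm_nonneg _
    · have hbdd : BddBelow (Set.range fun w : {w : Xd // (w : X) ≠ 0} =>
          (⨆ v : {v : Yd // (v : Y) ≠ 0},
            |G ((w : Xd) : X) ((v : Yd) : Y)| / ‖((v : Yd) : Y)‖) / ‖G ((w : Xd) : X)‖) := by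
        refine ⟨0, Set.forall_mem_range.mpr fun w => ?_⟩
        exact div_nonneg
          (Real.iSup_nonneg fun v => div_nonneg (abs_nonneg _) (norm_nonneg _))
          (norm_nonneg _)
      have hle : γd ≤ (⨆ v : {v : Yd // (v : Y) ≠ 0},
          |G x ((v : Yd) : Y)| / ‖((v : Yd) : Y)‖) / ‖G x‖ := by
        rw [hγdef]
        exact ciInf_le hbdd (⟨⟨x, hx⟩, h⟩ : {w : Xd // (w : X) ≠ 0})
      rw [hsup1 x, ← hTnorm x] at hle
      have hpos : (0:ℝ) < ‖T x‖ := norm_pos_iff.mpr (hTne x h)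
      rw [le_div_iff₀ hpos] at hle
      linarith
  -- γd ≤ 1
  have hγ1 : γd ≤ 1 := by
    have h1 := hγle x0 hx0K
    have h2 := hPle (T x0)
    have hpos : (0:ℝ) < ‖T x0‖ := norm_pos_iff.mpr (hTne x0 hx0)
    nlinarith
  -- minimality in squared form
  have hud2 : ∀ w : Xd, ‖P (T (ud : X) - T u)‖ ^ 2 ≤ ‖P (T (w : X) - T u)‖ ^ 2 := by
    intro w
    have := hud w
    rw [hsup2 ((ud : Xd) : X), hsup2 ((w : Xd) : X)] at this
    linarith
  -- orthogonality of the residual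
  have horth : ∀ x : X, x ∈ Xd → ⟪P (T (ud : X) - T u), P (T x)⟫ = 0 := by
    intro x hx
    by_cases hBz : P (T x) = 0
    · rw [hBz, inner_zero_right]
    set ρ : Y := T (ud : X) - T u with hρ
    set c : ℝ := ⟪P ρ, P (T x)⟫ with hc
    set B : ℝ := ‖P (T x)‖ ^ 2 with hB
    have hBpos : 0 < B := pow_pos (norm_pos_iff.mpr hBz) 2
    set t : ℝ := -c / B with ht
    clear_value c B t
    have h1 := hud2 (ud + t • (⟨x, hx⟩ : Xd))
    have hcoe : ((ud + t • (⟨x, hx⟩ : Xd) : Xd) : X) = (ud : X) + t • x := by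
      simp
    rw [hcoe] at h1
    have hTlin : T ((ud : X) + t • x) - T u = ρ + t • T x := by
      have : T ((ud : X) + t • x) = T (ud : X) + t • T x := by
        simp only [hT, map_add, map_smul]
      rw [this, hρ]; abel
    rw [hTlin, hPadd, hPsmul] at h1
    have hexp : ‖P ρ + t • P (T x)‖ ^ 2 = ‖P ρ‖ ^ 2 + 2 * (t * c) + t ^ 2 * B := by
      rw [norm_add_sq_real, inner_smul_right, norm_smul, Real.norm_eq_abs, mul_pow, sq_abs,
        ← hc, ← hB]
    rw [hexp] at h1
    have h2 : 0 ≤ 2 * (t * c) + t ^ 2 * B := by linarith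
    have hBne : B ≠ 0 := ne_of_gt hBpos
    have hval : 2 * (t * c) + t ^ 2 * B = -(c ^ 2 / B) := by
      rw [ht]; field_simp; ring
    rw [hval] at h2
    have h6 : c ^ 2 / B ≤ 0 := by linarith
    have h7 : c ^ 2 ≤ 0 := by
      have := (div_le_iff₀ hBpos).mp h6
      simpa using this
    have h8 : c ^ 2 = 0 := le_antisymm h7 (sq_nonneg c)
    exact sq_eq_zero_iff.mp h8
  -- the core quasi-optimality estimate
  have hq : T u - T (ud : X) = -(T (ud : X) - T u) := by abel
  have key : ∀ w : Xd, γd * ‖T u - T (ud : X)‖ ≤ ‖T u - T (w : X)‖ := by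
    intro w
    set q : Y := T u - T (ud : X) with hqdef
    set d : Y := T (ud : X) - T (w : X) with hddef
    have hsum : T u - T (w : X) = q + d := by rw [hqdef, hddef]; abel
    have hdXd : d = T ((ud : X) - (w : X)) := (hTsub _ _).symm
    have hdmem : ((ud : X) - (w : X)) ∈ Xd := Xd.sub_mem ud.2 w.2
    have hdγ : γd * ‖d‖ ≤ ‖P d‖ := by
      rw [hdXd]; exact hγle _ hdmem
    have hqd : ⟪P q, P d⟫ = 0 := by
      rw [hq, hPneg, inner_neg_left, hdXd]
      rw [horth _ hdmem, neg_zero]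
    set a : ℝ := ‖P q‖
    set b : ℝ := ‖q - P q‖
    set c : ℝ := ‖P d‖
    set e : ℝ := ‖d - P d‖
    have h1 : ‖q‖ ^ 2 = a ^ 2 + b ^ 2 := hPyth q
    have h2 : ‖d‖ ^ 2 = c ^ 2 + e ^ 2 := hPyth d
    have hcross1 : ⟪P q, d - P d⟫ = 0 :=
      (Submodule.mem_orthogonal Yd _).mp (hPorth d) _ (hPmem q)
    have hcross2 : ⟪q - P q, P d⟫ = 0 := by
      rw [real_inner_comm]
      exact (Submodule.mem_orthogonal Yd _).mp (hPorth q) _ (hPmem d)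
    have h3 : ⟪q, d⟫ = ⟪q - P q, d - P d⟫ := by
      have hdecq : q = P q + (q - P q) := by abel
      have hdecd : d = P d + (d - P d) := by abel
      calc ⟪q, d⟫ = ⟪P q + (q - P q), P d + (d - P d)⟫ := by rw [← hdecq, ← hdecd]
        _ = ⟪P q, P d⟫ + ⟪P q, d - P d⟫ + (⟪q - P q, P d⟫ + ⟪q - P q, d - P d⟫) := by
            rw [inner_add_left, inner_add_right, inner_add_right]
        _ = ⟪q - P q, d - P d⟫ := by rw [hqd, hcross1, hcross2]; ring
    have h4 : -(b * e) ≤ ⟪q, d⟫ := by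
      rw [h3]
      have := abs_real_inner_le_norm (q - P q) (d - P d)
      have habs := neg_abs_le ⟪q - P q, d - P d⟫
      nlinarith [abs_nonneg ⟪q - P q, d - P d⟫]
    have hN : a ^ 2 + b ^ 2 + c ^ 2 + e ^ 2 - 2 * (b * e) ≤ ‖q + d‖ ^ 2 := by
      have := norm_add_sq_real q d
      rw [h1, h2] at this
      linarith
    have hcc : γd ^ 2 * (c ^ 2 + e ^ 2) ≤ c ^ 2 := by
      rw [← h2]
      have h0 : 0 ≤ γd * ‖d‖ := mul_nonneg hγpos.le (norm_nonneg d)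
      have hmul := mul_self_le_mul_self h0 hdγ
      nlinarith [hmul]
    have hfinal : γd ^ 2 * (a ^ 2 + b ^ 2) ≤ ‖q + d‖ ^ 2 :=
      minres_core_arith γd a b c e _ hγpos hγ1 (norm_nonneg _) (norm_nonneg _) hcc hN
    rw [← h1] at hfinal
    rw [hsum]
    have h5 : (γd * ‖q‖) ^ 2 ≤ ‖q + d‖ ^ 2 := by rw [mul_pow]; exact hfinal
    have h6 : 0 ≤ γd * ‖q‖ := mul_nonneg hγpos.le (norm_nonneg _)
    calc γd * ‖q‖ = Real.sqrt ((γd * ‖q‖) ^ 2) := (Real.sqrt_sq h6).symm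
      _ ≤ Real.sqrt (‖q + d‖ ^ 2) := Real.sqrt_le_sqrt h5
      _ = ‖q + d‖ := Real.sqrt_sq (norm_nonneg _)
  -- finish
  have hnorm_eq : ∀ x : X, ‖G (u - x)‖ = ‖T u - T x‖ := by
    intro x
    rw [← hTnorm, hTsub]
  have hI : γd * ‖T u - T (ud : X)‖ ≤ ⨅ w : Xd, ‖G (u - (w : X))‖ := by
    haveI : Nonempty Xd := ⟨0⟩
    exact le_ciInf fun w => by rw [hnorm_eq]; exact key w
  rw [hnorm_eq (ud : X)]
  rw [one_div, ← div_eq_inv_mul, le_div_iff₀ hγpos]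
  linarith [hI]
end

section
/- In the setting of discretized minimal residual approximation, suppose additionally that ⟨·,·⟩_{Y^δ} is an inner product on Y^δ whose norm satisfies m^δ ‖v‖²_{Y^δ} ≤ ‖v‖²_Y ≤ M^δ ‖v‖²_{Y^δ} for all v ∈ Y^δ, with 0 < m^δ ≤ M^δ < ∞. Let u^δ ∈ X^δ minimize (1/2) sup over nonzero v ∈ Y^δ of |(G w − f)(v)|²/‖v‖²_{Y^δ}. Then |||u − u^δ|||_X ≤ (√(M^δ)/(γ^δ √(m^δ))) · inf over w ∈ X^δ of |||u − w|||_X. -/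
open NormedSpace

def BSp (α : Type*) : Type _ := α

def BSp.out {α : Type*} (a : BSp α) : α := a

def BSp.mk {α : Type*} (a : α) : BSp α := a

private lemma le_of_sq_le_sq' {a c : ℝ} (ha : 0 ≤ a) (hc : 0 ≤ c) (h : a^2 ≤ c^2) : a ≤ c := by
  nlinarith

theorem exists_b_rep {Y : Type*} [NormedAddCommGroup Y] [InnerProductSpace ℝ Y] [CompleteSpace Y]
    (Yd : Submodule ℝ Y) (hclosed : IsClosed (Yd : Set Y))
    (b : Yd →ₗ[ℝ] Yd →ₗ[ℝ] ℝ)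
    (hsymm : ∀ v w : Yd, b v w = b w v)
    (hpos : ∀ v : Yd, (v : Y) ≠ 0 → 0 < b v v)
    (md Md : ℝ) (hmd : 0 < md) (hMd : 0 ≤ Md)
    (hlow : ∀ v : Yd, md * b v v ≤ ‖(v : Y)‖ ^ 2)
    (hupp : ∀ v : Yd, ‖(v : Y)‖ ^ 2 ≤ Md * b v v)
    (y : Y) : ∃ j : Yd, ∀ v : Yd, b j v = (inner ℝ y (v : Y) : ℝ) := by
  haveI hcYd : CompleteSpace Yd := hclosed.completeSpace_coe
  letI : AddCommGroup (BSp Yd) := inferInstanceAs (AddCommGroup Yd)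
  letI : Module ℝ (BSp Yd) := inferInstanceAs (Module ℝ Yd)
  have hbnn : ∀ v : Yd, 0 ≤ b v v := by
    intro v
    by_cases h : (v : Y) = 0
    · have hv : v = 0 := by exact_mod_cast h
      simp [hv]
    · exact (hpos v h).le
  letI core : InnerProductSpace.Core ℝ (BSp Yd) :=
    { inner := fun x y => b x y
      conj_inner_symm := fun x y => by simpa using hsymm y x
      re_inner_nonneg := fun x => by simpa using hbnn x
      add_left := fun x y z => by exact LinearMap.map_add₂ b x y z
      smul_left := fun x y r => by simp; exact LinearMap.map_smul₂ b r x y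
      definite := fun x hx => by
        by_contra hne
        have hx0 : ((x.out : Yd) : Y) ≠ 0 := by
          intro h
          exact hne (by exact_mod_cast h)
        exact (hpos x.out hx0).ne' hx }
  letI : NormedAddCommGroup (BSp Yd) := core.toNormedAddCommGroup
  letI : InnerProductSpace ℝ (BSp Yd) := InnerProductSpace.ofCore core.toCore
  have hinner : ∀ x v : BSp Yd, (inner ℝ x v : ℝ) = b x v := fun _ _ => rfl
  have hnormB : ∀ x : BSp Yd, ‖x‖ ^ 2 = b x x := by
    intro x
    rw [← hinner x x, real_inner_self_eq_norm_sq]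
  -- identity linear equiv
  let e : (BSp Yd) ≃ₗ[ℝ] Yd :=
    { toFun := fun x => x
      invFun := fun x => x
      map_add' := fun _ _ => rfl
      map_smul' := fun _ _ => rfl
      left_inv := fun _ => rfl
      right_inv := fun _ => rfl }
  have hb1 : ∀ x : BSp Yd, ‖e x‖ ≤ Real.sqrt Md * ‖x‖ := by
    intro x
    have h1 : ‖e x‖ ^ 2 ≤ Md * b x x := hupp x
    have h2 : (Real.sqrt Md * ‖x‖) ^ 2 = Md * b x x := by
      rw [mul_pow, Real.sq_sqrt hMd, hnormB]
    exact le_of_sq_le_sq' (norm_nonneg _) (by positivity) (h2 ▸ h1)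
  have hb2 : ∀ x : Yd, ‖e.symm x‖ ≤ (Real.sqrt md)⁻¹ * ‖x‖ := by
    intro x
    have h1 : md * b x x ≤ ‖x‖ ^ 2 := hlow x
    have h3 : ‖e.symm x‖ ^ 2 = b x x := hnormB x
    have h2 : ((Real.sqrt md)⁻¹ * ‖x‖) ^ 2 = (‖x‖^2) / md := by
      rw [mul_pow, ← Real.sqrt_inv, Real.sq_sqrt (by positivity)]
      field_simp
    refine le_of_sq_le_sq' (norm_nonneg _) (by positivity) ?_
    rw [h2, h3, le_div_iff₀ hmd]
    linarith [h1]
  have cont1 : Continuous (e : BSp Yd → Yd) := AddMonoidHomClass.continuous_of_bound e.toLinearMap _ hb1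
  have cont2 : Continuous (e.symm : Yd → BSp Yd) := AddMonoidHomClass.continuous_of_bound e.symm.toLinearMap _ hb2
  let E : (BSp Yd) ≃L[ℝ] Yd := { e with continuous_toFun := cont1, continuous_invFun := cont2 }
  let ue : (BSp Yd) ≃ᵤ Yd :=
    { toEquiv := e.toEquiv
      uniformContinuous_toFun := (E : BSp Yd →L[ℝ] Yd).uniformContinuous
      uniformContinuous_invFun := (E.symm : Yd →L[ℝ] BSp Yd).uniformContinuous }
  haveI : CompleteSpace (BSp Yd) := ue.completeSpace_iff.mpr hcYd
  let φlin : BSp Yd →ₗ[ℝ] ℝ :=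
    { toFun := fun v => (inner ℝ y ((v.out : Yd) : Y) : ℝ)
      map_add' := fun v w => by
        show (inner ℝ y (((v + w).out : Yd) : Y) : ℝ) = (inner ℝ y ((v.out : Yd) : Y) : ℝ) + (inner ℝ y ((w.out : Yd) : Y) : ℝ)
        rw [show (v + w).out = v.out + w.out from rfl, Submodule.coe_add, inner_add_right]
      map_smul' := fun r v => by
        show (inner ℝ y (((r • v).out : Yd) : Y) : ℝ) = r * (inner ℝ y ((v.out : Yd) : Y) : ℝ)
        rw [show (r • v).out = r • v.out from rfl, Submodule.coe_smul, inner_smul_right] }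
  have hφbound : ∀ v : BSp Yd, ‖φlin v‖ ≤ (‖y‖ * Real.sqrt Md) * ‖v‖ := by
    intro v
    have h1 : ‖φlin v‖ ≤ ‖y‖ * ‖((v.out : Yd) : Y)‖ := norm_inner_le_norm _ _
    have h2 : ‖((v.out : Yd) : Y)‖ ≤ Real.sqrt Md * ‖v‖ := hb1 v
    calc ‖φlin v‖ ≤ ‖y‖ * (Real.sqrt Md * ‖v‖) := h1.trans (by
          exact mul_le_mul_of_nonneg_left h2 (norm_nonneg _))
      _ = (‖y‖ * Real.sqrt Md) * ‖v‖ := by ring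
  let φ : BSp Yd →L[ℝ] ℝ := φlin.mkContinuous _ hφbound
  let j : BSp Yd := (InnerProductSpace.toDual ℝ (BSp Yd)).symm φ
  refine ⟨j.out, fun v => ?_⟩
  have h := InnerProductSpace.toDual_symm_apply (𝕜 := ℝ) (E := BSp Yd) (x := BSp.mk v) (y := φ)
  have h2 : (inner ℝ j (BSp.mk v) : ℝ) = b j.out v := hinner j (BSp.mk v)
  have h3 : φ (BSp.mk v) = (inner ℝ y (v : Y) : ℝ) := rfl
  rw [h2, h3] at h
  exact h
private lemma le_of_sq_le_sq2 {a c : ℝ} (hc : 0 ≤ c) (h : a^2 ≤ c^2) : a ≤ c := by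
  nlinarith

theorem b_cauchy_schwarz {E : Type*} [AddCommGroup E] [Module ℝ E]
    (b : E →ₗ[ℝ] E →ₗ[ℝ] ℝ) (hsymm : ∀ x y : E, b x y = b y x)
    (hnn : ∀ x : E, 0 ≤ b x x) (x y : E) : (b x y)^2 ≤ b x x * b y y := by
  rcases eq_or_lt_of_le (hnn y) with hy | hy
  · -- b y y = 0 : show b x y = 0
    have hxy : b x y = 0 := by
      by_contra hne
      have key : ∀ t : ℝ, 0 ≤ b x x + 2*t*(b x y) := by
        intro t
        have h := hnn (x + t • y)
        have h2 : b (x + t • y) (x + t • y) = b x x + 2*t*(b x y) + t^2 * (b y y) := by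
          simp only [map_add, map_smul, LinearMap.add_apply, LinearMap.smul_apply,
            smul_eq_mul]
          rw [hsymm y x]; ring
        rw [h2, ← hy] at h
        linarith
      have h3 := key (-(b x x + 1)/(2 * b x y))
      have h4 : 2 * (-(b x x + 1)/(2 * b x y)) * (b x y) = -(b x x + 1) := by
        field_simp
      rw [h4] at h3
      linarith
    rw [hxy, ← hy]
    simp
  · have h := hnn ((b y y) • x - (b x y) • y)
    have h2 : b ((b y y) • x - (b x y) • y) ((b y y) • x - (b x y) • y)
        = (b y y) * ((b x x)*(b y y) - (b x y)^2) := by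
      simp only [map_sub, map_smul, LinearMap.sub_apply, LinearMap.smul_apply, smul_eq_mul]
      rw [hsymm y x]; ring
    rw [h2] at h
    nlinarith [hy]

theorem kato_core {E : Type*} [NormedAddCommGroup E] [InnerProductSpace ℝ E]
    (C : ℝ) (hC : 1 ≤ C) (R K : Set E)
    (hKsmul : ∀ (t : ℝ), ∀ k ∈ K, t • k ∈ K)
    (hA : ∀ r ∈ R, ∀ k ∈ K, ‖r‖ ≤ C * ‖r + k‖) :
    ∀ r ∈ R, ∀ k ∈ K, ‖k‖ ≤ C * ‖r + k‖ := by
  have hCpos : 0 < C := lt_of_lt_of_le one_pos hC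
  have hc2 : ∀ r ∈ R, ∀ k ∈ K, (inner ℝ r k : ℝ)^2 ≤ (1 - 1/C^2) * (‖r‖^2 * ‖k‖^2) := by
    intro r hr k hk
    have hfac : 0 ≤ 1 - 1/C^2 := by
      have h1 : (1:ℝ) ≤ C^2 := by nlinarith
      have h2 : 1/C^2 ≤ 1 := by
        rw [div_le_one (by positivity)]; exact h1
      linarith
    by_cases hk0 : k = 0
    · simp [hk0]
    · have hknz : (0:ℝ) < ‖k‖^2 := pow_pos (norm_pos_iff.mpr hk0) 2
      set t : ℝ := -(inner ℝ r k : ℝ)/‖k‖^2 with ht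
      have h := hA r hr (t • k) (hKsmul t k hk)
      have hexp : ‖r + t • k‖^2 = ‖r‖^2 - ((inner ℝ r k : ℝ))^2/‖k‖^2 := by
        rw [norm_add_sq_real, real_inner_smul_right, norm_smul, Real.norm_eq_abs, mul_pow,
          sq_abs, ht]
        field_simp
        ring
      have h2 : ‖r‖^2 ≤ C^2 * (‖r‖^2 - (inner ℝ r k:ℝ)^2/‖k‖^2) := by
        have h3 : ‖r‖^2 ≤ (C * ‖r + t • k‖)^2 := by
          have := pow_le_pow_left₀ (norm_nonneg r) h 2
          simpa using this
        rw [mul_pow, hexp] at h3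
        exact h3
      have h3 : ‖r‖^2*‖k‖^2 ≤ C^2*(‖r‖^2*‖k‖^2 - (inner ℝ r k:ℝ)^2) := by
        have h4 := mul_le_mul_of_nonneg_right h2 (le_of_lt hknz)
        calc ‖r‖^2*‖k‖^2 ≤ C^2 * (‖r‖^2 - (inner ℝ r k:ℝ)^2/‖k‖^2) * ‖k‖^2 := h4
          _ = C^2*(‖r‖^2*‖k‖^2 - (inner ℝ r k:ℝ)^2) := by field_simp
      have hC2pos : (0:ℝ) < C^2 := by positivity
      rw [← mul_le_mul_iff_right₀ hC2pos]
      have h5 : C^2*((1 - 1/C^2) * (‖r‖^2*‖k‖^2)) = (C^2-1)*(‖r‖^2*‖k‖^2) := by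
        field_simp
      rw [h5]
      nlinarith [h3]
  intro r hr k hk
  have hp := hc2 r hr k hk
  set lam := Real.sqrt (1 - 1/C^2) with hlam
  have hlamnn : 0 ≤ lam := Real.sqrt_nonneg _
  have hfac : 0 ≤ 1 - 1/C^2 := by
    have h1 : (1:ℝ) ≤ C^2 := by nlinarith
    have h2 : 1/C^2 ≤ 1 := by rw [div_le_one (by positivity)]; exact h1
    linarith
  have hlam2 : lam^2 = 1 - 1/C^2 := Real.sq_sqrt hfac
  have hpge : -(lam * (‖r‖ * ‖k‖)) ≤ (inner ℝ r k : ℝ) := by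
    have h1 : (inner ℝ r k:ℝ)^2 ≤ (lam*(‖r‖*‖k‖))^2 := by
      rw [mul_pow, mul_pow, hlam2]; linarith [hp]
    have h2 : |(inner ℝ r k:ℝ)| ≤ lam*(‖r‖*‖k‖) := by
      calc |(inner ℝ r k:ℝ)| = Real.sqrt ((inner ℝ r k:ℝ)^2) := (Real.sqrt_sq_eq_abs _).symm
        _ ≤ Real.sqrt ((lam*(‖r‖*‖k‖))^2) := Real.sqrt_le_sqrt h1
        _ = lam*(‖r‖*‖k‖) := Real.sqrt_sq (by positivity)
    linarith [neg_abs_le (inner ℝ r k : ℝ)]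
  have hexp : ‖r+k‖^2 = ‖r‖^2 + 2*(inner ℝ r k:ℝ) + ‖k‖^2 := norm_add_sq_real r k
  have key : C^2*lam^2 = C^2 - 1 := by rw [hlam2]; field_simp
  have h6 : 0 ≤ C^2*((inner ℝ r k:ℝ) + lam*(‖r‖*‖k‖)) :=
    mul_nonneg (by positivity) (by linarith)
  have hCk : ‖k‖^2 ≤ (C*‖r+k‖)^2 := by
    rw [mul_pow, hexp]
    nlinarith [h6, key, mul_nonneg (sq_nonneg C) (sq_nonneg (‖r‖ - lam*‖k‖))]
  exact le_of_sq_le_sq2 (by positivity) hCk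

open NormedSpace


set_option maxHeartbeats 1000000 in
/-- Quasi-optimality when the norm on `Y^δ` is replaced by an equivalent inner-product norm:
`|||u − u^δ|||_X ≤ (√M^δ/(γ^δ √m^δ)) inf_{w ∈ X^δ} |||u − w|||_X`. -/
theorem minres_quasi_optimality_changed_norm
    {X Y : Type*}
    [NormedAddCommGroup X] [InnerProductSpace ℝ X] [CompleteSpace X]
    [NormedAddCommGroup Y] [InnerProductSpace ℝ Y] [CompleteSpace Y]
    (G : X ≃L[ℝ] StrongDual ℝ Y) (f : StrongDual ℝ Y) (u : X) (hu : G u = f)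
    (Xd : Submodule ℝ X) (Yd : Submodule ℝ Y)
    (hXdclosed : IsClosed (Xd : Set X)) (hYdclosed : IsClosed (Yd : Set Y))
    (hXdbot : Xd ≠ ⊥) (hXdtop : Xd ≠ ⊤) (hYdbot : Yd ≠ ⊥) (hYdtop : Yd ≠ ⊤)
    -- the scalar product ⟨·,·⟩_{Y^δ} on Y^δ
    (b : Yd →ₗ[ℝ] Yd →ₗ[ℝ] ℝ)
    (hbsymm : ∀ v w : Yd, b v w = b w v)
    (hbpos : ∀ v : Yd, (v : Y) ≠ 0 → 0 < b v v)
    (md Md : ℝ) (hmd : 0 < md) (hmM : md ≤ Md)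
    -- norm equivalence: m^δ ‖v‖²_{Y^δ} ≤ ‖v‖²_Y ≤ M^δ ‖v‖²_{Y^δ} on Y^δ
    (hlow : ∀ v : Yd, md * b v v ≤ ‖(v : Y)‖ ^ 2)
    (hupp : ∀ v : Yd, ‖(v : Y)‖ ^ 2 ≤ Md * b v v)
    (γd : ℝ)
    (hγdef : γd = ⨅ w : {w : Xd // (w : X) ≠ 0},
        (⨆ v : {v : Yd // (v : Y) ≠ 0},
          |G ((w : Xd) : X) ((v : Yd) : Y)| / ‖((v : Yd) : Y)‖) / ‖G ((w : Xd) : X)‖)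
    (hγpos : 0 < γd)
    (ud : Xd)
    (hud : ∀ w : Xd,
      (1/2) * ⨆ v : {v : Yd // (v : Y) ≠ 0},
          |(G ((ud : Xd) : X) - f) ((v : Yd) : Y)| ^ 2 / b (v : Yd) (v : Yd)
      ≤ (1/2) * ⨆ v : {v : Yd // (v : Y) ≠ 0},
          |(G ((w : Xd) : X) - f) ((v : Yd) : Y)| ^ 2 / b (v : Yd) (v : Yd)) :
    ‖G (u - (ud : X))‖
      ≤ (Real.sqrt Md / (γd * Real.sqrt md)) * ⨅ w : Xd, ‖G (u - (w : X))‖ := by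
  classical
  have hMd : (0:ℝ) ≤ Md := le_trans hmd.le hmM
  have hMdpos : (0:ℝ) < Md := lt_of_lt_of_le hmd hmM
  have hsmd : 0 < Real.sqrt md := Real.sqrt_pos.mpr hmd
  have hsMd : 0 < Real.sqrt Md := Real.sqrt_pos.mpr hMdpos
  -- nonempty index types
  obtain ⟨v0, hv0mem, hv0ne⟩ := Submodule.exists_mem_ne_zero_of_ne_bot hYdbot
  haveI hnY : Nonempty {v : Yd // (v : Y) ≠ 0} := ⟨⟨⟨v0, hv0mem⟩, hv0ne⟩⟩
  obtain ⟨x0, hx0mem, hx0ne⟩ := Submodule.exists_mem_ne_zero_of_ne_bot hXdbot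
  haveI hnX : Nonempty {w : Xd // (w : X) ≠ 0} := ⟨⟨⟨x0, hx0mem⟩, hx0ne⟩⟩
  -- basic b facts
  have hbnn : ∀ v : Yd, 0 ≤ b v v := by
    intro v
    by_cases h : (v : Y) = 0
    · have hv : v = 0 := by exact_mod_cast h
      simp [hv]
    · exact (hbpos v h).le
  have hdef : ∀ v : Yd, b v v = 0 → v = 0 := by
    intro v h
    by_contra hne
    have hv : (v : Y) ≠ 0 := fun h0 => hne (by exact_mod_cast h0)
    exact (hbpos v hv).ne' h
  have bcs := b_cauchy_schwarz b hbsymm hbnn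
  -- Riesz representer for b
  have hrep : ∀ y : Y, ∃ j : Yd, ∀ v : Yd, b j v = (inner ℝ y (v : Y) : ℝ) :=
    fun y => exists_b_rep Yd hYdclosed b hbsymm hbpos md Md hmd hMd hlow hupp y
  choose J hJ using hrep
  have huniq : ∀ j j' : Yd, (∀ v : Yd, b j v = b j' v) → j = j' := by
    intro j j' h
    have hzero : b (j - j') (j - j') = 0 := by
      have h2 : b (j - j') (j - j') = b j (j - j') - b j' (j - j') := by
        rw [map_sub b j j', LinearMap.sub_apply]
      rw [h2, h (j - j'), sub_self]
    have := hdef _ hzero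
    exact sub_eq_zero.mp this
  have Jadd : ∀ y z : Y, J (y + z) = J y + J z := by
    intro y z
    refine huniq _ _ (fun v => ?_)
    rw [hJ, map_add, LinearMap.add_apply, hJ, hJ, inner_add_left]
  have Jsmul : ∀ (t : ℝ) (y : Y), J (t • y) = t • J y := by
    intro t y
    refine huniq _ _ (fun v => ?_)
    rw [hJ, map_smul, LinearMap.smul_apply, hJ, real_inner_smul_left]
    simp
  have Jneg : ∀ y : Y, J (-y) = -(J y) := by
    intro y
    have h := Jsmul (-1) y
    simpa using h
  -- dual pairing via Riesz on Y
  have htd : ∀ (ℓ : StrongDual ℝ Y) (v : Y),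
      ℓ v = (inner ℝ ((InnerProductSpace.toDual ℝ Y).symm ℓ) v : ℝ) :=
    fun ℓ v => (InnerProductSpace.toDual_symm_apply).symm
  -- the discrete dual norm squared equals b (J y) (J y)
  have hS : ∀ ℓ : StrongDual ℝ Y,
      (⨆ v : {v : Yd // (v : Y) ≠ 0},
          |ℓ ((v : Yd) : Y)| ^ 2 / b (v : Yd) (v : Yd))
        = b (J ((InnerProductSpace.toDual ℝ Y).symm ℓ))
            (J ((InnerProductSpace.toDual ℝ Y).symm ℓ)) := by
    intro ℓ
    set y := (InnerProductSpace.toDual ℝ Y).symm ℓ with hy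
    have hterm : ∀ v : {v : Yd // (v : Y) ≠ 0},
        |ℓ ((v : Yd) : Y)| ^ 2 / b (v : Yd) (v : Yd)
          = (b (J y) (v : Yd))^2 / b (v : Yd) (v : Yd) := by
      intro v
      rw [htd ℓ, ← hJ, sq_abs]
    have hub : ∀ v : {v : Yd // (v : Y) ≠ 0},
        |ℓ ((v : Yd) : Y)| ^ 2 / b (v : Yd) (v : Yd) ≤ b (J y) (J y) := by
      intro v
      rw [hterm v]
      have hv : 0 < b (v : Yd) (v : Yd) := hbpos _ v.2
      rw [div_le_iff₀ hv]
      exact bcs (J y) (v : Yd)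
    apply le_antisymm
    · exact ciSup_le hub
    · by_cases hz : J y = 0
      · rw [hz]
        simp only [map_zero, LinearMap.zero_apply]
        apply Real.iSup_nonneg
        intro v
        apply div_nonneg (by positivity) (hbnn _)
      · have hvne : ((J y : Yd) : Y) ≠ 0 := fun h => hz (by exact_mod_cast h)
        have hbdd : BddAbove (Set.range (fun v : {v : Yd // (v : Y) ≠ 0} =>
            |ℓ ((v : Yd) : Y)| ^ 2 / b (v : Yd) (v : Yd))) := by
          refine ⟨b (J y) (J y), ?_⟩
          rintro x ⟨v, rfl⟩
          exact hub v
        have hle := le_ciSup hbdd (⟨J y, hvne⟩ : {v : Yd // (v : Y) ≠ 0})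
        refine le_trans ?_ hle
        rw [hterm ⟨J y, hvne⟩]
        have hv : 0 < b (J y) (J y) := hbpos _ hvne
        rw [sq, mul_div_assoc, div_self hv.ne', mul_one]
  -- the residual representer and orthogonality
  set e : Y := (InnerProductSpace.toDual ℝ Y).symm (G (ud : X) - f) with he
  have horth : ∀ d : X, d ∈ Xd →
      b (J e) (J ((InnerProductSpace.toDual ℝ Y).symm (G d))) = 0 := by
    intro d hd
    set c : Y := (InnerProductSpace.toDual ℝ Y).symm (G d) with hc
    have hkey : ∀ t : ℝ, b (J e) (J e)
        ≤ b (J e) (J e) + 2*t*(b (J e) (J c)) + t^2 * (b (J c) (J c)) := by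
      intro t
      have hw := hud (ud + t • (⟨d, hd⟩ : Xd))
      rw [hS, hS] at hw
      have harg : (InnerProductSpace.toDual ℝ Y).symm
          (G ((ud + t • (⟨d, hd⟩ : Xd) : Xd) : X) - f) = e + t • c := by
        have h1 : ((ud + t • (⟨d, hd⟩ : Xd) : Xd) : X) = (ud : X) + t • d := by
          push_cast
          rfl
        rw [h1, map_add, map_smul]
        have h2 : G (ud : X) + t • G d - f = (G (ud : X) - f) + t • G d := by
          abel
        rw [h2, map_add, map_smul, ← he, ← hc]
      rw [harg, Jadd, Jsmul] at hw
      have hexp : b (J e + t • J c) (J e + t • J c)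
          = b (J e) (J e) + 2*t*(b (J e) (J c)) + t^2*(b (J c) (J c)) := by
        simp only [map_add, map_smul, LinearMap.add_apply, LinearMap.smul_apply, smul_eq_mul]
        rw [hbsymm (J c) (J e)]
        ring
      rw [hexp] at hw
      linarith
    set s := b (J e) (J c) with hs
    set q := b (J c) (J c) with hq
    have hqnn : 0 ≤ q := hbnn _
    have hq1 : (0:ℝ) < q + 1 := by linarith
    have h1 := hkey (-(s/(q+1)))
    have h3 : 0 ≤ 2*(-(s/(q+1)))*s + (-(s/(q+1)))^2*q := by linarith
    have h4 : (q+1)^2 * (2*(-(s/(q+1)))*s + (-(s/(q+1)))^2*q) = s^2*(-q-2) := by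
      field_simp
      ring
    have h5 : 0 ≤ s^2*(-q-2) := by
      rw [← h4]
      exact mul_nonneg (sq_nonneg _) h3
    have hs2 : s^2 = 0 := le_antisymm (by nlinarith) (sq_nonneg s)
    exact sq_eq_zero_iff.mp hs2
  -- γd facts
  have hsupnn : ∀ w' : {w : Xd // (w : X) ≠ 0},
      0 ≤ (⨆ v : {v : Yd // (v : Y) ≠ 0},
        |G ((w' : Xd) : X) ((v : Yd) : Y)| / ‖((v : Yd) : Y)‖) / ‖G ((w' : Xd) : X)‖ := by
    intro w'
    apply div_nonneg _ (norm_nonneg _)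
    apply Real.iSup_nonneg
    intro v
    positivity
  have hbddγ : BddBelow (Set.range (fun w : {w : Xd // (w : X) ≠ 0} =>
      (⨆ v : {v : Yd // (v : Y) ≠ 0},
        |G ((w : Xd) : X) ((v : Yd) : Y)| / ‖((v : Yd) : Y)‖) / ‖G ((w : Xd) : X)‖)) := by
    refine ⟨0, ?_⟩
    rintro x ⟨w', rfl⟩
    exact hsupnn w'
  have hγle1 : γd ≤ 1 := by
    rw [hγdef]
    refine ciInf_le_of_le hbddγ (⟨⟨x0, hx0mem⟩, hx0ne⟩ : {w : Xd // (w : X) ≠ 0}) ?_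
    have hGn : 0 < ‖G x0‖ := by
      rw [norm_pos_iff]
      simp only [ne_eq, ContinuousLinearEquiv.map_eq_zero_iff]
      exact hx0ne
    rw [div_le_one hGn]
    apply ciSup_le
    intro v
    have hvpos : 0 < ‖((v : Yd) : Y)‖ := norm_pos_iff.mpr v.2
    rw [div_le_iff₀ hvpos]
    have := (G x0).le_opNorm ((v : Yd) : Y)
    rwa [Real.norm_eq_abs] at this
  have hγlow : ∀ d : X, d ∈ Xd → d ≠ 0 → γd * ‖G d‖
      ≤ ⨆ v : {v : Yd // (v : Y) ≠ 0}, |G d ((v : Yd) : Y)| / ‖((v : Yd) : Y)‖ := by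
    intro d hd hd0
    have hGn : 0 < ‖G d‖ := by
      rw [norm_pos_iff]
      simp only [ne_eq, ContinuousLinearEquiv.map_eq_zero_iff]
      exact hd0
    have h1 : γd ≤ (⨆ v : {v : Yd // (v : Y) ≠ 0},
        |G d ((v : Yd) : Y)| / ‖((v : Yd) : Y)‖) / ‖G d‖ := by
      rw [hγdef]
      exact ciInf_le hbddγ (⟨⟨d, hd⟩, hd0⟩ : {w : Xd // (w : X) ≠ 0})
    rw [le_div_iff₀ hGn] at h1
    linarith
  -- sqrt bound : √(b (J y) (J y)) ≤ √Md ‖y‖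
  have hE : ∀ y : Y, Real.sqrt (b (J y) (J y)) ≤ Real.sqrt Md * ‖y‖ := by
    intro y
    set t := Real.sqrt (b (J y) (J y)) with htdef
    have htnn : 0 ≤ t := Real.sqrt_nonneg _
    have ht2 : t^2 = b (J y) (J y) := Real.sq_sqrt (hbnn _)
    have h1 : b (J y) (J y) = (inner ℝ y ((J y : Yd) : Y) : ℝ) := hJ y (J y)
    have h2 : (inner ℝ y ((J y : Yd) : Y) : ℝ) ≤ ‖y‖ * ‖((J y : Yd) : Y)‖ :=
      real_inner_le_norm _ _
    have h3 : ‖((J y : Yd) : Y)‖ ≤ Real.sqrt Md * t := by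
      refine le_of_sq_le_sq2 (by positivity) ?_
      rw [mul_pow, Real.sq_sqrt hMd, ht2]
      exact hupp _
    have h4 : t^2 ≤ ‖y‖ * (Real.sqrt Md * t) := by
      rw [ht2, h1]
      exact h2.trans (mul_le_mul_of_nonneg_left h3 (norm_nonneg y))
    rcases eq_or_lt_of_le htnn with ht0 | htpos
    · rw [← ht0]
      positivity
    · nlinarith
  -- constant
  set C : ℝ := Real.sqrt Md / (γd * Real.sqrt md) with hCdef
  have hγsm : 0 < γd * Real.sqrt md := mul_pos hγpos hsmd
  have hC1 : 1 ≤ C := by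
    rw [hCdef, le_div_iff₀ hγsm]
    have h1 : Real.sqrt md ≤ Real.sqrt Md := Real.sqrt_le_sqrt hmM
    nlinarith
  have hCpos : 0 < C := lt_of_lt_of_le one_pos hC1
  -- sets for the Kato-type lemma
  set Rset : Set Y := (fun d : X => (InnerProductSpace.toDual ℝ Y).symm (G d)) '' (Xd : Set X)
    with hRset
  set Kset : Set Y := {k : Y | ∀ d ∈ Xd,
      b (J k) (J ((InnerProductSpace.toDual ℝ Y).symm (G d))) = 0} with hKset
  have hKsmul : ∀ (t : ℝ), ∀ k ∈ Kset, t • k ∈ Kset := by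
    intro t k hk d hd
    rw [Jsmul, map_smul, LinearMap.smul_apply, hk d hd]
    simp
  have hA : ∀ r ∈ Rset, ∀ k ∈ Kset, ‖r‖ ≤ C * ‖r + k‖ := by
    rintro r ⟨d, hd, rfl⟩ k hk
    show ‖(InnerProductSpace.toDual ℝ Y).symm (G d)‖
      ≤ C * ‖(InnerProductSpace.toDual ℝ Y).symm (G d) + k‖
    set rr : Y := (InnerProductSpace.toDual ℝ Y).symm (G d) with hrr
    by_cases hd0 : d = 0
    · have : rr = 0 := by rw [hrr, hd0]; simp
      rw [this]
      simp only [norm_zero]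
      positivity
    · set σ := Real.sqrt (b (J rr) (J rr)) with hσ
      have hσnn : 0 ≤ σ := Real.sqrt_nonneg _
      have hσ2 : σ^2 = b (J rr) (J rr) := Real.sq_sqrt (hbnn _)
      -- sup bound
      have hsup2 : (⨆ v : {v : Yd // (v : Y) ≠ 0},
          |G d ((v : Yd) : Y)| / ‖((v : Yd) : Y)‖) ≤ σ / Real.sqrt md := by
        apply ciSup_le
        intro v
        have hvpos : 0 < ‖((v : Yd) : Y)‖ := norm_pos_iff.mpr v.2
        have h1 : |G d ((v : Yd) : Y)| = |b (J rr) (v : Yd)| := by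
          rw [htd (G d), ← hrr, ← hJ]
        have h2 : |b (J rr) (v : Yd)| ≤ σ * Real.sqrt (b (v : Yd) (v : Yd)) := by
          calc |b (J rr) (v : Yd)| = Real.sqrt ((b (J rr) (v : Yd))^2) :=
                (Real.sqrt_sq_eq_abs _).symm
            _ ≤ Real.sqrt (b (J rr) (J rr) * b (v : Yd) (v : Yd)) :=
                Real.sqrt_le_sqrt (bcs _ _)
            _ = σ * Real.sqrt (b (v : Yd) (v : Yd)) := Real.sqrt_mul (hbnn _) _
        have h3 : Real.sqrt (b (v : Yd) (v : Yd)) ≤ ‖((v : Yd) : Y)‖ / Real.sqrt md := by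
          rw [le_div_iff₀ hsmd]
          have h4 : Real.sqrt (b (v : Yd) (v : Yd)) * Real.sqrt md
              = Real.sqrt (md * b (v : Yd) (v : Yd)) := by
            rw [Real.sqrt_mul hmd.le, mul_comm]
          rw [h4]
          calc Real.sqrt (md * b (v : Yd) (v : Yd)) ≤ Real.sqrt (‖((v : Yd) : Y)‖^2) :=
              Real.sqrt_le_sqrt (hlow _)
            _ = ‖((v : Yd) : Y)‖ := Real.sqrt_sq (norm_nonneg _)
        rw [div_le_div_iff₀ hvpos hsmd, h1]
        calc |b (J rr) (v : Yd)| * Real.sqrt md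
            ≤ (σ * Real.sqrt (b (v : Yd) (v : Yd))) * Real.sqrt md := by
              exact mul_le_mul_of_nonneg_right h2 hsmd.le
          _ ≤ (σ * (‖((v : Yd) : Y)‖ / Real.sqrt md)) * Real.sqrt md := by
              have := mul_le_mul_of_nonneg_left h3 hσnn
              exact mul_le_mul_of_nonneg_right this hsmd.le
          _ = σ * ‖((v : Yd) : Y)‖ := by
              field_simp
        -- done
      have hstep1 : γd * ‖G d‖ ≤ σ / Real.sqrt md := (hγlow d hd hd0).trans hsup2
      -- σ ≤ τ
      set τ := Real.sqrt (b (J (rr + k)) (J (rr + k))) with hτ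
      have hτnn : 0 ≤ τ := Real.sqrt_nonneg _
      have hστ : σ ≤ τ := by
        have horthk : b (J k) (J rr) = 0 := hk d hd
        have h1 : b (J rr) (J rr) = b (J (rr + k)) (J rr) := by
          rw [Jadd, map_add, LinearMap.add_apply, horthk]
          ring
        have h2 : b (J (rr + k)) (J rr) ≤ τ * σ := by
          calc b (J (rr + k)) (J rr) ≤ |b (J (rr + k)) (J rr)| := le_abs_self _
            _ = Real.sqrt ((b (J (rr + k)) (J rr))^2) := (Real.sqrt_sq_eq_abs _).symm
            _ ≤ Real.sqrt (b (J (rr + k)) (J (rr + k)) * b (J rr) (J rr)) :=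
                Real.sqrt_le_sqrt (bcs _ _)
            _ = τ * σ := Real.sqrt_mul (hbnn _) _
        rcases eq_or_lt_of_le hσnn with h0 | hσpos
        · rw [← h0]; exact hτnn
        · nlinarith
      have hstep4 : τ ≤ Real.sqrt Md * ‖rr + k‖ := hE (rr + k)
      have hnorm_r : ‖rr‖ = ‖G d‖ := LinearIsometryEquiv.norm_map _ _
      -- combine
      have hchain : γd * ‖rr‖ * Real.sqrt md ≤ Real.sqrt Md * ‖rr + k‖ := by
        have h1 : γd * ‖rr‖ * Real.sqrt md ≤ σ := by
          rw [hnorm_r]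
          calc γd * ‖G d‖ * Real.sqrt md ≤ (σ / Real.sqrt md) * Real.sqrt md :=
              mul_le_mul_of_nonneg_right hstep1 hsmd.le
            _ = σ := by field_simp
        exact h1.trans (hστ.trans hstep4)
      rw [hCdef, div_mul_eq_mul_div, le_div_iff₀ hγsm]
      calc ‖rr‖ * (γd * Real.sqrt md) = γd * ‖rr‖ * Real.sqrt md := by ring
        _ ≤ Real.sqrt Md * ‖rr + k‖ := hchain
        _ = Real.sqrt Md * ‖rr + k‖ := rfl
  -- apply the Kato-type lemma
  have hkato := kato_core C hC1 Rset Kset hKsmul hA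
  -- quasi-optimality against arbitrary w
  have hfinal : ∀ w : Xd, ‖G (u - (ud : X))‖ ≤ C * ‖G (u - (w : X))‖ := by
    intro w
    set k : Y := (InnerProductSpace.toDual ℝ Y).symm (G (u - (ud : X))) with hk
    set r : Y := (InnerProductSpace.toDual ℝ Y).symm (G ((ud : X) - (w : X))) with hr
    have hkK : k ∈ Kset := by
      intro d hd
      have h1 : G (u - (ud : X)) = -(G (ud : X) - f) := by
        rw [map_sub, hu]
        abel
      have h2 : k = -e := by
        rw [hk, h1, map_neg, he]
      rw [h2, Jneg, map_neg, LinearMap.neg_apply, horth d hd]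
      simp
    have hrR : r ∈ Rset := ⟨(ud : X) - (w : X), Xd.sub_mem ud.2 w.2, rfl⟩
    have hrk : r + k = (InnerProductSpace.toDual ℝ Y).symm (G (u - (w : X))) := by
      rw [hr, hk, ← map_add, ← map_add]
      congr 1
      abel
    have h := hkato r hrR k hkK
    rw [hrk] at h
    have hnk : ‖k‖ = ‖G (u - (ud : X))‖ := LinearIsometryEquiv.norm_map _ _
    have hnrk : ‖(InnerProductSpace.toDual ℝ Y).symm (G (u - (w : X)))‖
        = ‖G (u - (w : X))‖ := LinearIsometryEquiv.norm_map _ _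
    rw [hnk, hnrk] at h
    exact h
  -- conclude with the infimum
  haveI : Nonempty Xd := ⟨0⟩
  have hdiv : ‖G (u - (ud : X))‖ / C ≤ ⨅ w : Xd, ‖G (u - (w : X))‖ := by
    apply le_ciInf
    intro w
    rw [div_le_iff₀ hCpos]
    calc ‖G (u - (ud : X))‖ ≤ C * ‖G (u - (w : X))‖ := hfinal w
      _ = ‖G (u - (w : X))‖ * C := by ring
  rw [div_le_iff₀ hCpos] at hdiv
  calc ‖G (u - (ud : X))‖ ≤ (⨅ w : Xd, ‖G (u - (w : X))‖) * C := hdiv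
    _ = C * ⨅ w : Xd, ‖G (u - (w : X))‖ := by ring
end

section
/- Let G ∈ Lis(X, Y') between Hilbert spaces. Equip Y with the norm ‖G' v‖_{X'} where G' : Y → X' is the adjoint. Then the corresponding dual norm on Y' satisfies sup over nonzero v ∈ Y of |f(v)|/‖G' v‖_{X'} = ‖G⁻¹ f‖_X for every f ∈ Y'. In particular, G : X → Y' and G' : Y → X' are isometries with respect to these norms. -/
open NormedSpace

lemma flip_surj
    {X Y : Type*}
    [NormedAddCommGroup X] [InnerProductSpace ℝ X] [CompleteSpace X]
    [NormedAddCommGroup Y] [InnerProductSpace ℝ Y] [CompleteSpace Y]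
    (G : X ≃L[ℝ] StrongDual ℝ Y) (g : StrongDual ℝ X) :
    ∃ v : Y, (G : X →L[ℝ] StrongDual ℝ Y).flip v = g := by
  set T := InnerProductSpace.toDual ℝ Y
  set k : StrongDual ℝ Y :=
    (g.comp (G.symm : StrongDual ℝ Y →L[ℝ] X)).comp
      T.toContinuousLinearEquiv.toContinuousLinearMap
  refine ⟨T.symm k, ?_⟩
  ext w
  have h1 : (G w) (T.symm k) = (inner ℝ (T.symm (G w)) (T.symm k)) := by
    rw [InnerProductSpace.toDual_symm_apply]
  rw [ContinuousLinearMap.flip_apply, ContinuousLinearEquiv.coe_coe, h1, real_inner_comm,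
    InnerProductSpace.toDual_symm_apply]
  simp [k, T]

/-- With the optimal test norm `‖G'·‖_{X'}` on `Y`, the dual norm on `Y'` is
`‖G⁻¹·‖_X`; in particular `G` and `G'` are isometries w.r.t. these norms. -/
theorem optimal_test_norm_dual
    {X Y : Type*}
    [NormedAddCommGroup X] [InnerProductSpace ℝ X] [CompleteSpace X]
    [NormedAddCommGroup Y] [InnerProductSpace ℝ Y] [CompleteSpace Y]
    [Nontrivial Y]
    (G : X ≃L[ℝ] StrongDual ℝ Y) :
    -- G' v := (w ↦ (G w)(v)) is the adjoint G' : Y → X'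
    let G' : Y →L[ℝ] StrongDual ℝ X := (G : X →L[ℝ] StrongDual ℝ Y).flip
    (∀ f : StrongDual ℝ Y,
        (⨆ v : {v : Y // v ≠ 0}, |f (v : Y)| / ‖G' (v : Y)‖) = ‖G.symm f‖) ∧
    (∀ x : X,
        (⨆ v : {v : Y // v ≠ 0}, |G x (v : Y)| / ‖G' (v : Y)‖) = ‖x‖) := by
  intro G'
  have hne : Nonempty {v : Y // v ≠ 0} := by
    obtain ⟨y, hy⟩ := exists_ne (0 : Y)
    exact ⟨⟨y, hy⟩⟩
  have key : ∀ f : StrongDual ℝ Y,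
      (⨆ v : {v : Y // v ≠ 0}, |f (v : Y)| / ‖G' (v : Y)‖) = ‖G.symm f‖ := by
    intro f
    have hfv : ∀ v : Y, f v = (G' v) (G.symm f) := by
      intro v
      simp [G', ContinuousLinearMap.flip_apply]
    have hub : ∀ v : {v : Y // v ≠ 0}, |f (v : Y)| / ‖G' (v : Y)‖ ≤ ‖G.symm f‖ := by
      intro v
      rcases eq_or_lt_of_le (norm_nonneg (G' (v : Y))) with h0 | hpos
      · have : G' (v : Y) = 0 := by
          rw [← norm_eq_zero]; exact h0.symm
        rw [hfv, this]
        simp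
      · rw [div_le_iff₀ hpos, hfv]
        calc |(G' (v : Y)) (G.symm f)| ≤ ‖G' (v : Y)‖ * ‖G.symm f‖ := by
              simpa [Real.norm_eq_abs] using (G' (v : Y)).le_opNorm (G.symm f)
          _ = ‖G.symm f‖ * ‖G' (v : Y)‖ := mul_comm _ _
    have hbdd : BddAbove (Set.range fun v : {v : Y // v ≠ 0} =>
        |f (v : Y)| / ‖G' (v : Y)‖) := ⟨‖G.symm f‖, by rintro y ⟨v, rfl⟩; exact hub v⟩
    refine le_antisymm (ciSup_le hub) ?_
    rcases eq_or_ne f 0 with rfl | hf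
    · simp
    · set x := G.symm f with hxdef
      have hx : x ≠ 0 := by
        intro h
        apply hf
        rw [← G.apply_symm_apply f, ← hxdef, h, map_zero]
      obtain ⟨v, hv⟩ := flip_surj G (InnerProductSpace.toDual ℝ X x)
      have hGx : (G' v) x = (inner ℝ x x) := by
        rw [show G' v = _ from hv, InnerProductSpace.toDual_apply_apply]
      have hfvx : f v = ‖x‖ * ‖x‖ := by
        rw [hfv, hGx, real_inner_self_eq_norm_mul_norm]
      have hvne : v ≠ 0 := by
        intro h
        apply hx
        have : (inner ℝ x x) = 0 := by rw [← hGx, h]; simp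
        exact inner_self_eq_zero.mp this
      have hnorm : ‖G' v‖ = ‖x‖ := by
        rw [show G' v = _ from hv, LinearIsometryEquiv.norm_map]
      have hval : |f v| / ‖G' v‖ = ‖x‖ := by
        rw [hfvx, hnorm, abs_of_nonneg (mul_nonneg (norm_nonneg x) (norm_nonneg x)),
          mul_div_assoc, div_self (norm_ne_zero_iff.mpr hx), mul_one]
      calc ‖G.symm f‖ = |f v| / ‖G' v‖ := by rw [hval, hxdef]
        _ ≤ _ := le_ciSup hbdd ⟨v, hvne⟩
  refine ⟨key, fun x => ?_⟩
  simpa using key (G x)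
end

section
/- Let G ∈ Lis(X, Y') between Hilbert spaces, f ∈ Y', u = G⁻¹ f. Let X^δ ⊂ X, Y^δ ⊂ Y, X̂^δ ⊂ X be closed nonzero proper subspaces with inf-sup constants γ^δ := inf_{0≠w∈X^δ} [sup_{0≠v∈Y^δ} |(Gw)(v)|/‖G'v‖_{X'}]/‖w‖_X > 0 and μ^δ := inf_{0≠v∈Y^δ} [sup_{0≠w∈X̂^δ} |(G'v)(w)|/‖w‖_X]/‖G'v‖_{X'} > 0. Let u^δ ∈ X^δ minimize (1/2) sup over nonzero v ∈ Y^δ of |(G w − f)(v)|²/‖G' v‖²_{(X̂^δ)'}. Then ‖u − u^δ‖_X ≤ (1/(γ^δ μ^δ)) · inf over w ∈ X^δ of ‖u − w‖_X. -/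
open NormedSpace ContinuousLinearMap InnerProductSpace

noncomputable def rieszR (H : Type*) [NormedAddCommGroup H] [InnerProductSpace ℝ H]
    [CompleteSpace H] : StrongDual ℝ H →L[ℝ] H :=
  LinearMap.mkContinuous
    { toFun := fun ℓ => (InnerProductSpace.toDual ℝ H).symm ℓ
      map_add' := fun a b => map_add _ a b
      map_smul' := fun t ℓ => by
        refine ext_inner_right ℝ fun w => ?_
        simp [toDual_symm_apply, real_inner_smul_left] }
    1 (fun ℓ => by simp [LinearIsometryEquiv.norm_map])

@[simp] lemma rieszR_inner {H : Type*} [NormedAddCommGroup H] [InnerProductSpace ℝ H]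
    [CompleteSpace H] (ℓ : StrongDual ℝ H) (x : H) : (inner ℝ (rieszR H ℓ) x : ℝ) = ℓ x :=
  toDual_symm_apply

@[simp] lemma rieszR_norm {H : Type*} [NormedAddCommGroup H] [InnerProductSpace ℝ H]
    [CompleteSpace H] (ℓ : StrongDual ℝ H) : ‖rieszR H ℓ‖ = ‖ℓ‖ :=
  LinearIsometryEquiv.norm_map _ ℓ

lemma aux_norm_proj {H : Type*} [NormedAddCommGroup H] [InnerProductSpace ℝ H]
    (a b : H) (hb : b ≠ 0) :
    ‖a + (-(inner ℝ a b / ‖b‖^2)) • b‖^2 = ‖a‖^2 - (inner ℝ a b : ℝ)^2 / ‖b‖^2 := by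
  have hb2 : (0:ℝ) < ‖b‖^2 := pow_pos (norm_pos_iff.mpr hb) 2
  rw [norm_add_sq_real, real_inner_smul_right, norm_smul, Real.norm_eq_abs, mul_pow, sq_abs]
  field_simp
  ring

lemma aux_inner_zero {H : Type*} [NormedAddCommGroup H] [InnerProductSpace ℝ H]
    (a b : H) (h : ∀ t : ℝ, ‖a‖^2 ≤ ‖a + t • b‖^2) : (inner ℝ a b : ℝ) = 0 := by
  by_cases hb : b = 0
  · simp [hb]
  · have hb2 : (0:ℝ) < ‖b‖^2 := pow_pos (norm_pos_iff.mpr hb) 2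
    have ht := h (-(inner ℝ a b / ‖b‖^2))
    rw [aux_norm_proj a b hb] at ht
    have h2 : (inner ℝ a b : ℝ)^2 / ‖b‖^2 ≤ 0 := by linarith
    have h7 : (inner ℝ a b : ℝ)^2 = ((inner ℝ a b : ℝ)^2 / ‖b‖^2) * ‖b‖^2 := by field_simp
    have h8 : (inner ℝ a b : ℝ)^2 ≤ 0 := by nlinarith [h2, hb2]
    have h9 : (inner ℝ a b : ℝ)^2 = 0 := le_antisymm h8 (sq_nonneg _)
    exact pow_eq_zero_iff two_ne_zero |>.mp h9

lemma aux_geom {H : Type*} [NormedAddCommGroup H] [InnerProductSpace ℝ H]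
    (M : Submodule ℝ H) (q : H) (c : ℝ) (hc : 0 < c) (hc1 : c ≤ 1)
    (H1 : ∀ y ∈ M, ∀ t : ℝ, c * ‖y‖ ≤ ‖y + t • q‖) :
    ∀ p ∈ M, c * ‖q‖ ≤ ‖p + q‖ := by
  intro p hp
  by_cases hq : q = 0
  · simp only [hq, norm_zero, mul_zero, add_zero]
    positivity
  · have hq2 : (0:ℝ) < ‖q‖^2 := pow_pos (norm_pos_iff.mpr hq) 2
    have key : (inner ℝ p q : ℝ)^2 ≤ (1 - c^2) * (‖p‖^2 * ‖q‖^2) := by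
      have ht := H1 p hp (-(inner ℝ p q / ‖q‖^2))
      have h2 : (c * ‖p‖)^2 ≤ ‖p + (-(inner ℝ p q / ‖q‖^2)) • q‖^2 := by
        have h0 : 0 ≤ c * ‖p‖ := by positivity
        nlinarith [ht, norm_nonneg (p + (-(inner ℝ p q / ‖q‖^2)) • q)]
      rw [aux_norm_proj p q hq] at h2
      have h7 : (inner ℝ p q : ℝ)^2 = ((inner ℝ p q : ℝ)^2 / ‖q‖^2) * ‖q‖^2 := by field_simp
      nlinarith [h2, hq2, norm_nonneg p, sq_nonneg (inner ℝ p q : ℝ), h7,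
        mul_le_mul_of_nonneg_right h2 hq2.le]
    set s : ℝ := Real.sqrt (1 - c^2) with hs
    have hs0 : 0 ≤ s := Real.sqrt_nonneg _
    have hs2 : s^2 = 1 - c^2 := Real.sq_sqrt (by nlinarith)
    have h8 : (inner ℝ p q : ℝ)^2 ≤ (s * (‖p‖ * ‖q‖))^2 := by
      calc (inner ℝ p q : ℝ)^2 ≤ (1 - c^2) * (‖p‖^2 * ‖q‖^2) := key
        _ = (s * (‖p‖ * ‖q‖))^2 := by rw [mul_pow, hs2, mul_pow]
    have habs : |(inner ℝ p q : ℝ)| ≤ s * (‖p‖ * ‖q‖) := by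
      have h9 := Real.sqrt_le_sqrt h8
      rwa [Real.sqrt_sq_eq_abs, Real.sqrt_sq (by positivity)] at h9
    have hin : -(s * (‖p‖ * ‖q‖)) ≤ (inner ℝ p q : ℝ) := neg_le_of_abs_le habs
    have hexp : ‖p + q‖^2 = ‖p‖^2 + 2 * (inner ℝ p q : ℝ) + ‖q‖^2 := norm_add_sq_real p q
    have hfinal : (c * ‖q‖)^2 ≤ ‖p + q‖^2 := by
      rw [hexp]
      nlinarith [sq_nonneg (‖p‖ - s * ‖q‖), hs2, hin, norm_nonneg p, norm_nonneg q]
    nlinarith [norm_nonneg (p + q), mul_nonneg hc.le (norm_nonneg q), hfinal]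

lemma aux_GFlow {X Y : Type*}
    [NormedAddCommGroup X] [InnerProductSpace ℝ X]
    [NormedAddCommGroup Y] [InnerProductSpace ℝ Y]
    (G : X ≃L[ℝ] StrongDual ℝ Y) (v : Y) :
    ‖v‖ ≤ max ‖(G.symm : StrongDual ℝ Y →L[ℝ] X)‖ 1 * ‖(G : X →L[ℝ] StrongDual ℝ Y).flip v‖ := by
  set K1 : ℝ := max ‖(G.symm : StrongDual ℝ Y →L[ℝ] X)‖ 1 with hK1
  have hK1pos : 0 < K1 := lt_of_lt_of_le one_pos (le_max_right _ _)
  by_cases hv : v = 0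
  · simp [hv]
  · have hℓ : ‖innerSL ℝ v‖ = ‖v‖ := innerSL_apply_norm (𝕜 := ℝ) v
    have h1 : (G : X →L[ℝ] StrongDual ℝ Y).flip v (G.symm (innerSL ℝ v)) = ‖v‖^2 := by
      simp [flip_apply, real_inner_self_eq_norm_sq]
    have h2 : ‖G.symm (innerSL ℝ v)‖ ≤ K1 * ‖v‖ := by
      calc ‖G.symm (innerSL ℝ v)‖ ≤ ‖(G.symm : StrongDual ℝ Y →L[ℝ] X)‖ * ‖innerSL ℝ v‖ :=
            (G.symm : StrongDual ℝ Y →L[ℝ] X).le_opNorm _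
        _ = ‖(G.symm : StrongDual ℝ Y →L[ℝ] X)‖ * ‖v‖ := by rw [hℓ]
        _ ≤ K1 * ‖v‖ := mul_le_mul_of_nonneg_right (le_max_left _ _) (norm_nonneg v)
    have h3 := ((G : X →L[ℝ] StrongDual ℝ Y).flip v).le_opNorm (G.symm (innerSL ℝ v))
    rw [Real.norm_eq_abs, h1, abs_of_nonneg (by positivity)] at h3
    have hvpos : 0 < ‖v‖ := norm_pos_iff.mpr hv
    nlinarith [norm_nonneg ((G : X →L[ℝ] StrongDual ℝ Y).flip v), h2, h3]

lemma aux_sup_ratio {X : Type*} [NormedAddCommGroup X] [InnerProductSpace ℝ X]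
    (M : Submodule ℝ X) (hM : M ≠ ⊥) (b : X) (hb : b ∈ M) :
    (⨆ w : {w : M // (w : X) ≠ 0}, |(inner ℝ b (w : X) : ℝ)| / ‖(w : X)‖) = ‖b‖ := by
  obtain ⟨w₀, hw₀m, hw₀⟩ := Submodule.exists_mem_ne_zero_of_ne_bot hM
  haveI : Nonempty {w : M // (w : X) ≠ 0} := ⟨⟨⟨w₀, hw₀m⟩, hw₀⟩⟩
  have hbdd : ∀ w : {w : M // (w : X) ≠ 0}, |(inner ℝ b (w : X) : ℝ)| / ‖(w : X)‖ ≤ ‖b‖ := by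
    intro w
    rw [div_le_iff₀ (norm_pos_iff.mpr w.2)]
    exact abs_real_inner_le_norm b _
  apply le_antisymm
  · exact ciSup_le hbdd
  · by_cases hb0 : b = 0
    · rw [hb0, norm_zero]
      exact Real.iSup_nonneg fun w => by positivity
    · refine le_ciSup_of_le ⟨‖b‖, ?_⟩ ⟨⟨b, hb⟩, hb0⟩ ?_
      · rintro x ⟨w, rfl⟩; exact hbdd w
      · have hbp : 0 < ‖b‖ := norm_pos_iff.mpr hb0
        show ‖b‖ ≤ |(inner ℝ b b : ℝ)| / ‖b‖
        rw [real_inner_self_eq_norm_mul_norm, abs_of_nonneg (by positivity),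
          mul_div_assoc, div_self hbp.ne', mul_one]

lemma aux_sup_sq {X : Type*} [NormedAddCommGroup X] [InnerProductSpace ℝ X]
    {ι : Type*} [Nonempty ι] (e : ι → X) (he : ∀ i, e i ≠ 0) (b : X)
    (hb : b = 0 ∨ ∃ i, e i = b) :
    (⨆ i, (inner ℝ b (e i) : ℝ)^2 / ‖e i‖^2) = ‖b‖^2 := by
  have hbdd : ∀ i, (inner ℝ b (e i) : ℝ)^2 / ‖e i‖^2 ≤ ‖b‖^2 := by
    intro i
    rw [div_le_iff₀ (pow_pos (norm_pos_iff.mpr (he i)) 2)]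
    nlinarith [abs_real_inner_le_norm b (e i), abs_nonneg (inner ℝ b (e i) : ℝ),
      norm_nonneg b, norm_nonneg (e i), sq_abs (inner ℝ b (e i) : ℝ)]
  rcases hb with hb0 | ⟨i₀, hi₀⟩
  · subst hb0
    simp only [inner_zero_left, ne_eq, OfNat.ofNat_ne_zero, not_false_eq_true, zero_pow,
      zero_div, norm_zero]
    rw [ciSup_const]
  · have hb0 : b ≠ 0 := hi₀ ▸ he i₀
    have hbp : 0 < ‖b‖ := norm_pos_iff.mpr hb0
    apply le_antisymm
    · exact ciSup_le hbdd
    · refine le_ciSup_of_le ⟨‖b‖^2, ?_⟩ i₀ ?_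
      · rintro x ⟨i, rfl⟩; exact hbdd i
      · rw [hi₀, real_inner_self_eq_norm_sq]
        have heq : (‖b‖^2)^2 / ‖b‖^2 = ‖b‖^2 := by field_simp
        rw [heq]


lemma aux_final {X : Type*} [NormedAddCommGroup X] [InnerProductSpace ℝ X]
    (Xd : Submodule ℝ X) (L : X →L[ℝ] X)
    (u ud : X) (hudm : ud ∈ Xd) (γ μ : ℝ) (hγ : 0 < γ) (hμ : 0 < μ)
    (y₀ : X) (hy₀m : y₀ ∈ Xd) (hy₀ : y₀ ≠ 0)
    (hLle : ∀ x, ‖L x‖ ≤ ‖x‖ / μ)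
    (hLge : ∀ y ∈ Xd, γ * ‖y‖ ≤ ‖L y‖)
    (hmin : ∀ w ∈ Xd, ‖L ud - L u‖^2 ≤ ‖L w - L u‖^2) :
    ∀ w ∈ Xd, γ * μ * ‖u - ud‖ ≤ ‖u - w‖ := by
  have horth : ∀ z ∈ Xd, (inner ℝ (L ud - L u) (L z) : ℝ) = 0 := by
    intro z hz
    apply aux_inner_zero
    intro t
    have h := hmin (ud + t • z) (Xd.add_mem hudm (Xd.smul_mem t hz))
    have hc : L (ud + t • z) - L u = (L ud - L u) + t • L z := by
      rw [map_add, map_smul]; abel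
    rw [hc] at h
    exact h
  have hH : ∀ y ∈ Xd, ∀ t : ℝ, γ * μ * ‖y‖ ≤ ‖y + t • (u - ud)‖ := by
    intro y hy t
    have h1 := hLge y hy
    have horth' : (inner ℝ (L y) (L u - L ud) : ℝ) = 0 := by
      rw [(neg_sub (L ud) (L u)).symm, inner_neg_right, real_inner_comm, horth y hy, neg_zero]
    have hexp := norm_add_sq_real (L y) (t • (L u - L ud))
    rw [real_inner_smul_right, horth', mul_zero, mul_zero, add_zero] at hexp
    have h2 : ‖L y‖^2 ≤ ‖L y + t • (L u - L ud)‖^2 := by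
      rw [hexp]; linarith [sq_nonneg ‖t • (L u - L ud)‖]
    have h6 : ‖L y‖ ≤ ‖L y + t • (L u - L ud)‖ :=
      (pow_le_pow_iff_left₀ (norm_nonneg _) (norm_nonneg _) two_ne_zero).mp h2
    have h3 : L y + t • (L u - L ud) = L (y + t • (u - ud)) := by
      rw [map_add, map_smul, map_sub]
    have h4 := hLle (y + t • (u - ud))
    have h5 : ‖L y‖ ≤ ‖y + t • (u - ud)‖ / μ := by rw [h3] at h6; exact h6.trans h4
    calc γ * μ * ‖y‖ = μ * (γ * ‖y‖) := by ring
      _ ≤ μ * ‖L y‖ := mul_le_mul_of_nonneg_left h1 hμ.le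
      _ ≤ μ * (‖y + t • (u - ud)‖ / μ) := mul_le_mul_of_nonneg_left h5 hμ.le
      _ = ‖y + t • (u - ud)‖ := by field_simp
  have hc : 0 < γ * μ := mul_pos hγ hμ
  have hc1 : γ * μ ≤ 1 := by
    have h := hH y₀ hy₀m 0
    simp only [zero_smul, add_zero] at h
    have hy0 : 0 < ‖y₀‖ := norm_pos_iff.mpr hy₀
    have h' : γ * μ * ‖y₀‖ ≤ 1 * ‖y₀‖ := by rw [one_mul]; exact h
    exact le_of_mul_le_mul_right h' hy0
  intro w hw
  have hgeom := aux_geom Xd (u - ud) (γ * μ) hc hc1 hH (ud - w) (Xd.sub_mem hudm hw)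
  have heq : (ud - w) + (u - ud) = u - w := by abel
  rwa [heq] at hgeom

set_option maxHeartbeats 1000000 in
/-- Quasi-optimality of the practical MINRES method with the optimal test norm and a
discretized dual norm: `‖u − u^δ‖_X ≤ (1/(γ^δ μ^δ)) inf_{w ∈ X^δ} ‖u − w‖_X`. -/
theorem minres_optimal_test_norm_quasi_optimality
    {X Y : Type*}
    [NormedAddCommGroup X] [InnerProductSpace ℝ X] [CompleteSpace X]
    [NormedAddCommGroup Y] [InnerProductSpace ℝ Y] [CompleteSpace Y]
    (G : X ≃L[ℝ] StrongDual ℝ Y) (f : StrongDual ℝ Y) (u : X) (hu : G u = f)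
    (Xd : Submodule ℝ X) (Yd : Submodule ℝ Y) (Xhat : Submodule ℝ X)
    (hXdclosed : IsClosed (Xd : Set X)) (hYdclosed : IsClosed (Yd : Set Y))
    (hXhatclosed : IsClosed (Xhat : Set X))
    (hXdbot : Xd ≠ ⊥) (hXdtop : Xd ≠ ⊤) (hYdbot : Yd ≠ ⊥) (hYdtop : Yd ≠ ⊤)
    (hXhatbot : Xhat ≠ ⊥) (hXhattop : Xhat ≠ ⊤)
    (γd μd : ℝ)
    (hγdef : γd = ⨅ w : {w : Xd // (w : X) ≠ 0},
        (⨆ v : {v : Yd // (v : Y) ≠ 0},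
          |G ((w : Xd) : X) ((v : Yd) : Y)|
            / ‖((G : X →L[ℝ] StrongDual ℝ Y).flip ((v : Yd) : Y))‖) / ‖((w : Xd) : X)‖)
    (hγpos : 0 < γd)
    (hμdef : μd = ⨅ v : {v : Yd // (v : Y) ≠ 0},
        (⨆ w : {w : Xhat // (w : X) ≠ 0},
          |G ((w : Xhat) : X) ((v : Yd) : Y)| / ‖((w : Xhat) : X)‖)
        / ‖((G : X →L[ℝ] StrongDual ℝ Y).flip ((v : Yd) : Y))‖)
    (hμpos : 0 < μd)
    (ud : Xd)
    (hud : ∀ w : Xd,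
      (1/2) * ⨆ v : {v : Yd // (v : Y) ≠ 0},
          |(G ((ud : Xd) : X) - f) ((v : Yd) : Y)| ^ 2
            / (⨆ w' : {w' : Xhat // (w' : X) ≠ 0},
                |G ((w' : Xhat) : X) ((v : Yd) : Y)| / ‖((w' : Xhat) : X)‖) ^ 2
      ≤ (1/2) * ⨆ v : {v : Yd // (v : Y) ≠ 0},
          |(G ((w : Xd) : X) - f) ((v : Yd) : Y)| ^ 2
            / (⨆ w' : {w' : Xhat // (w' : X) ≠ 0},
                |G ((w' : Xhat) : X) ((v : Yd) : Y)| / ‖((w' : Xhat) : X)‖) ^ 2) :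
    ‖u - (ud : X)‖ ≤ (1 / (γd * μd)) * ⨅ w : Xd, ‖u - (w : X)‖ := by
  haveI : CompleteSpace Yd := hYdclosed.completeSpace_coe
  haveI : CompleteSpace Xhat := hXhatclosed.completeSpace_coe
  obtain ⟨v₀, hv₀m, hv₀⟩ := Submodule.exists_mem_ne_zero_of_ne_bot hYdbot
  haveI : Nonempty {v : Yd // (v : Y) ≠ 0} := ⟨⟨⟨v₀, hv₀m⟩, hv₀⟩⟩
  obtain ⟨y₀, hy₀m, hy₀⟩ := Submodule.exists_mem_ne_zero_of_ne_bot hXdbot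
  set GF := (G : X →L[ℝ] StrongDual ℝ Y).flip with hGF
  -- Stage 1: the opaque operator E
  obtain ⟨E, hEmem, hEinner, hEle⟩ :
      ∃ E : Yd →L[ℝ] X, (∀ v : Yd, E v ∈ Xhat) ∧
        (∀ (v : Yd) (w' : X), w' ∈ Xhat → (inner ℝ (E v) w' : ℝ) = G w' (v : Y)) ∧
        (∀ v : Yd, ‖E v‖ ≤ ‖GF (v : Y)‖) := by
    refine ⟨Xhat.subtypeL.comp ((Xhat.orthogonalProjectionOnto).comp
      ((rieszR X).comp (GF.comp Yd.subtypeL))), fun v => (Xhat.orthogonalProjectionOnto _).2,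
      ?_, ?_⟩
    · intro v w' hw'
      have h1 : (inner ℝ (rieszR X (GF (v:Y))) w' : ℝ) = G w' (v : Y) := by
        rw [rieszR_inner]; simp [hGF]
      have h2 : rieszR X (GF (v:Y)) - (Xhat.orthogonalProjectionOnto (rieszR X (GF (v:Y))) : X)
          ∈ Xhatᗮ := Submodule.sub_starProjection_mem_orthogonal _
      have h3 : (inner ℝ (rieszR X (GF (v:Y))
          - (Xhat.subtypeL.comp ((Xhat.orthogonalProjectionOnto).comp
            ((rieszR X).comp (GF.comp Yd.subtypeL))) v)) w' : ℝ) = 0 := by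
        rw [real_inner_comm]
        exact (Submodule.mem_orthogonal Xhat _).1 h2 w' hw'
      rw [inner_sub_left, sub_eq_zero] at h3
      rw [← h1, h3]
    · intro v
      have h2 := (Xhat.orthogonalProjectionOnto).le_opNorm (rieszR X (GF (v:Y)))
      have h3 := Xhat.orthogonalProjectionOnto_norm_le
      have h4 : ‖Xhat.subtypeL.comp ((Xhat.orthogonalProjectionOnto).comp
            ((rieszR X).comp (GF.comp Yd.subtypeL))) v‖
          = ‖(Xhat.orthogonalProjectionOnto (rieszR X (GF (v:Y))))‖ := rfl
      rw [h4]
      calc ‖(Xhat.orthogonalProjectionOnto (rieszR X (GF (v:Y))))‖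
          ≤ ‖(Xhat.orthogonalProjectionOnto : X →L[ℝ] Xhat)‖ * ‖rieszR X (GF (v:Y))‖ := h2
        _ ≤ 1 * ‖rieszR X (GF (v:Y))‖ :=
            mul_le_mul_of_nonneg_right h3 (norm_nonneg _)
        _ = ‖GF (v:Y)‖ := by simp
  -- Stage 2: basic norm facts
  have hNv : ∀ v : Yd,
      (⨆ w' : {w' : Xhat // (w' : X) ≠ 0}, |G ((w' : Xhat) : X) (v : Y)| / ‖((w' : Xhat) : X)‖)
        = ‖E v‖ := by
    intro v
    rw [← aux_sup_ratio Xhat hXhatbot (E v) (hEmem v)]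
    exact iSup_congr fun w' => by rw [hEinner v _ w'.1.2]
  have hK1pos : 0 < max ‖(G.symm : StrongDual ℝ Y →L[ℝ] X)‖ 1 :=
    lt_of_lt_of_le one_pos (le_max_right _ _)
  have hGFlow : ∀ v : Y, ‖v‖ ≤ max ‖(G.symm : StrongDual ℝ Y →L[ℝ] X)‖ 1 * ‖GF v‖ :=
    fun v => aux_GFlow G v
  have hGFpos : ∀ v : Y, v ≠ 0 → 0 < ‖GF v‖ := by
    intro v hv
    have h1 := hGFlow v
    have h2 : 0 < ‖v‖ := norm_pos_iff.mpr hv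
    nlinarith [norm_nonneg (GF v)]
  have hμv : ∀ v : Yd, μd * ‖GF (v : Y)‖ ≤ ‖E v‖ := by
    intro v
    by_cases hv : (v : Y) = 0
    · have hv0 : v = 0 := Submodule.coe_eq_zero.mp hv
      rw [hv0]
      simp
    · have hbdd : BddBelow (Set.range fun v : {v : Yd // (v : Y) ≠ 0} =>
          (⨆ w' : {w' : Xhat // (w' : X) ≠ 0},
            |G ((w' : Xhat) : X) ((v : Yd) : Y)| / ‖((w' : Xhat) : X)‖) / ‖GF ((v : Yd) : Y)‖) := by
        refine ⟨0, ?_⟩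
        rintro x ⟨v', rfl⟩
        exact div_nonneg (Real.iSup_nonneg fun _ => by positivity) (norm_nonneg _)
      have h1 := hμdef ▸ ciInf_le hbdd ⟨v, hv⟩
      rw [hNv v] at h1
      exact (le_div_iff₀ (hGFpos _ hv)).mp h1
  have hEpos : ∀ v : Yd, (v : Y) ≠ 0 → 0 < ‖E v‖ :=
    fun v hv => lt_of_lt_of_le (mul_pos hμpos (hGFpos _ hv)) (hμv v)
  -- Stage 3: the opaque operator D
  obtain ⟨D, hDkey⟩ : ∃ D : X →L[ℝ] Yd,
      ∀ (x : X) (v : Yd), (inner ℝ (E (D x)) (E v) : ℝ) = G x (v : Y) := by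
    set B : Yd →L[ℝ] Yd →L[ℝ] ℝ :=
      (((G : X →L[ℝ] StrongDual ℝ Y).comp E).flip.comp Yd.subtypeL).flip with hB
    have hBapp : ∀ m v : Yd, B m v = G (E m) (v : Y) := by
      intro m v; simp [hB, flip_apply]
    have hBinner : ∀ m v : Yd, B m v = (inner ℝ (E m) (E v) : ℝ) := by
      intro m v
      rw [hBapp, real_inner_comm, hEinner v (E m) (hEmem m)]
    have hcoercive : IsCoercive B := by
      refine ⟨μd^2 / (max ‖(G.symm : StrongDual ℝ Y →L[ℝ] X)‖ 1)^2, by positivity, fun v => ?_⟩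
      have h0 : ‖(v : Y)‖ = ‖v‖ := rfl
      have h1 := hGFlow (v : Y)
      have h2 : μd * ‖GF (v:Y)‖ ≤ ‖E v‖ := hμv v
      have h3 : B v v = ‖E v‖^2 := by rw [hBinner, real_inner_self_eq_norm_sq]
      rw [h3, ← h0]
      have hμ0 := hμpos.le
      have h4 : μd * ‖(v:Y)‖ ≤ max ‖(G.symm : StrongDual ℝ Y →L[ℝ] X)‖ 1 * ‖E v‖ := by
        nlinarith [norm_nonneg (GF (v:Y))]
      have h5 : 0 ≤ ‖E v‖ := norm_nonneg _
      have h6 : 0 ≤ ‖(v:Y)‖ := norm_nonneg _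
      rw [div_mul_eq_mul_div, div_mul_eq_mul_div,
        div_le_iff₀ (by positivity : (0:ℝ) < (max ‖(G.symm : StrongDual ℝ Y →L[ℝ] X)‖ 1)^2)]
      have h7 : (μd * ‖(v:Y)‖) * (μd * ‖(v:Y)‖)
          ≤ (max ‖(G.symm : StrongDual ℝ Y →L[ℝ] X)‖ 1 * ‖E v‖)
            * (max ‖(G.symm : StrongDual ℝ Y →L[ℝ] X)‖ 1 * ‖E v‖) :=
        mul_le_mul h4 h4 (by positivity) (by positivity)
      nlinarith [h7]
    refine ⟨((hcoercive.continuousLinearEquivOfBilin.symm : Yd →L[ℝ] Yd)).comp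
      ((rieszR Yd).comp ((GF.comp Yd.subtypeL).flip)), ?_⟩
    intro x v
    set m : Yd := ((hcoercive.continuousLinearEquivOfBilin.symm : Yd →L[ℝ] Yd))
      ((rieszR Yd) (((GF.comp Yd.subtypeL).flip) x)) with hm
    have e1 : (inner ℝ (E m) (E v) : ℝ) = B m v := (hBinner _ _).symm
    have e2 : B m v = (inner ℝ (hcoercive.continuousLinearEquivOfBilin m) v : ℝ) :=
      (hcoercive.continuousLinearEquivOfBilin_apply _ _).symm
    have e3 : hcoercive.continuousLinearEquivOfBilin m
        = rieszR Yd (((GF.comp Yd.subtypeL).flip) x) := by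
      rw [hm]
      exact hcoercive.continuousLinearEquivOfBilin.apply_symm_apply _
    have e4 : (inner ℝ (rieszR Yd (((GF.comp Yd.subtypeL).flip) x)) v : ℝ)
        = ((GF.comp Yd.subtypeL).flip) x v := rieszR_inner _ _
    have e5 : ((GF.comp Yd.subtypeL).flip) x v = G x (v : Y) := by
      simp [flip_apply, hGF]
    exact e1.trans (e2.trans (by rw [e3, e4, e5]))
  -- Stage 4
  have hDle : ∀ x : X, ‖E (D x)‖ ≤ ‖x‖ / μd := by
    intro x
    have h1 : (inner ℝ (E (D x)) (E (D x)) : ℝ) = G x ((D x : Y)) := hDkey x (D x)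
    have h2 : ‖E (D x)‖^2 = G x ((D x : Y)) := by
      rw [← h1, real_inner_self_eq_norm_sq]
    have h3 : G x ((D x : Y)) = GF ((D x : Y)) x := by simp [hGF, flip_apply]
    have h4 : |GF ((D x : Y)) x| ≤ ‖GF ((D x : Y))‖ * ‖x‖ := by
      calc |GF ((D x : Y)) x| = ‖GF ((D x : Y)) x‖ := (Real.norm_eq_abs _).symm
        _ ≤ ‖GF ((D x : Y))‖ * ‖x‖ := (GF _).le_opNorm x
    have h5 : μd * ‖GF ((D x : Y))‖ ≤ ‖E (D x)‖ := hμv (D x)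
    have h6 : ‖E (D x)‖^2 ≤ ‖GF ((D x : Y))‖ * ‖x‖ := by
      rw [h2, h3]; exact (le_abs_self _).trans h4
    rw [le_div_iff₀ hμpos]
    rcases eq_or_lt_of_le (norm_nonneg (E (D x))) with h0 | h0
    · rw [← h0, zero_mul]; exact norm_nonneg x
    · have h7 : μd * ‖E (D x)‖^2 ≤ μd * (‖GF ((D x : Y))‖ * ‖x‖) :=
        mul_le_mul_of_nonneg_left h6 hμpos.le
      have h8 : μd * ‖GF ((D x : Y))‖ * ‖x‖ ≤ ‖E (D x)‖ * ‖x‖ :=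
        mul_le_mul_of_nonneg_right h5 (norm_nonneg x)
      have h9 : μd * ‖E (D x)‖^2 ≤ ‖E (D x)‖ * ‖x‖ := by
        calc μd * ‖E (D x)‖^2 ≤ μd * (‖GF ((D x : Y))‖ * ‖x‖) := h7
          _ = μd * ‖GF ((D x : Y))‖ * ‖x‖ := by ring
          _ ≤ ‖E (D x)‖ * ‖x‖ := h8
      have h10 : ‖E (D x)‖ * (‖E (D x)‖ * μd) ≤ ‖E (D x)‖ * ‖x‖ := by
        calc ‖E (D x)‖ * (‖E (D x)‖ * μd) = μd * ‖E (D x)‖^2 := by ring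
          _ ≤ ‖E (D x)‖ * ‖x‖ := h9
      exact le_of_mul_le_mul_left h10 h0
  have hDge : ∀ y : Xd, γd * ‖(y : X)‖ ≤ ‖E (D (y : X))‖ := by
    intro y
    by_cases hy : (y : X) = 0
    · rw [hy, norm_zero, mul_zero]; exact norm_nonneg _
    · have hbdd : BddBelow (Set.range fun w : {w : Xd // (w : X) ≠ 0} =>
          (⨆ v : {v : Yd // (v : Y) ≠ 0},
            |G ((w : Xd) : X) ((v : Yd) : Y)| / ‖GF ((v : Yd) : Y)‖) / ‖((w : Xd) : X)‖) := by
        refine ⟨0, ?_⟩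
        rintro x ⟨w', rfl⟩
        exact div_nonneg (Real.iSup_nonneg fun _ => by positivity) (norm_nonneg _)
      have h1 := hγdef ▸ ciInf_le hbdd ⟨y, hy⟩
      have h2 : (⨆ v : {v : Yd // (v : Y) ≠ 0},
          |G ((y : Xd) : X) ((v : Yd) : Y)| / ‖GF ((v : Yd) : Y)‖) ≤ ‖E (D (y : X))‖ := by
        apply ciSup_le
        intro v
        rw [div_le_iff₀ (hGFpos _ v.2)]
        have h3 : |G ((y : Xd) : X) ((v : Yd) : Y)| = |(inner ℝ (E (D (y : X))) (E (v : Yd)) : ℝ)| := by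
          rw [hDkey]
        rw [h3]
        calc |(inner ℝ (E (D (y : X))) (E (v : Yd)) : ℝ)|
            ≤ ‖E (D (y : X))‖ * ‖E (v : Yd)‖ := abs_real_inner_le_norm _ _
          _ ≤ ‖E (D (y : X))‖ * ‖GF ((v : Yd) : Y)‖ :=
              mul_le_mul_of_nonneg_left (hEle (v : Yd)) (norm_nonneg _)
      have hy0 : 0 < ‖(y : X)‖ := norm_pos_iff.mpr hy
      rw [le_div_iff₀ hy0] at h1
      exact h1.trans h2
  -- rewrite the residual functional
  have hrw : ∀ x : Xd,
      (⨆ v : {v : Yd // (v : Y) ≠ 0},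
          |(G ((x : Xd) : X) - f) ((v : Yd) : Y)| ^ 2
            / (⨆ w' : {w' : Xhat // (w' : X) ≠ 0},
                |G ((w' : Xhat) : X) ((v : Yd) : Y)| / ‖((w' : Xhat) : X)‖) ^ 2)
        = ‖E (D (x : X) - D u)‖ ^ 2 := by
    intro x
    have hbval : E (D (x : X) - D u) = 0 ∨
        ∃ i : {v : Yd // (v : Y) ≠ 0}, E (i : Yd) = E (D (x : X) - D u) := by
      by_cases hm : ((D (x : X) - D u : Yd) : Y) = 0
      · left
        rw [Submodule.coe_eq_zero.mp hm]
        simp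
      · exact Or.inr ⟨⟨D (x : X) - D u, hm⟩, rfl⟩
    rw [← aux_sup_sq (fun v : {v : Yd // (v : Y) ≠ 0} => E (v : Yd))
      (fun v => norm_pos_iff.mp (hEpos (v : Yd) v.2)) (E (D (x : X) - D u)) hbval]
    refine iSup_congr fun v => ?_
    have hnum : (G ((x : Xd) : X) - f) ((v : Yd) : Y)
        = (inner ℝ (E (D (x : X) - D u)) (E (v : Yd)) : ℝ) := by
      calc (G ((x : Xd) : X) - f) ((v : Yd) : Y)
          = G ((x : Xd) : X) ((v : Yd) : Y) - G u ((v : Yd) : Y) := by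
            rw [hu]; rfl
        _ = (inner ℝ (E (D (x : X))) (E (v : Yd)) : ℝ)
              - (inner ℝ (E (D u)) (E (v : Yd)) : ℝ) := by rw [hDkey, hDkey]
        _ = (inner ℝ (E (D (x : X) - D u)) (E (v : Yd)) : ℝ) := by
            rw [map_sub E, inner_sub_left]
    rw [hNv (v : Yd), hnum, sq_abs]
  have hud' : ∀ w : Xd, ‖E (D ((ud : Xd) : X) - D u)‖ ^ 2 ≤ ‖E (D ((w : Xd) : X) - D u)‖ ^ 2 := by
    intro w
    have h := hud w
    rw [hrw ud, hrw w] at h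
    linarith
  -- conclude via the abstract lemma
  have hLle : ∀ x : X, ‖(E.comp D) x‖ ≤ ‖x‖ / μd := fun x => hDle x
  have hLge : ∀ y ∈ Xd, γd * ‖y‖ ≤ ‖(E.comp D) y‖ := fun y hy => hDge ⟨y, hy⟩
  have hmin : ∀ w ∈ Xd, ‖(E.comp D) ((ud : Xd) : X) - (E.comp D) u‖^2
      ≤ ‖(E.comp D) w - (E.comp D) u‖^2 := by
    intro w hw
    have h := hud' ⟨w, hw⟩
    have he1 : E (D ((ud : Xd) : X) - D u) = (E.comp D) ((ud : Xd) : X) - (E.comp D) u := by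
      rw [map_sub]; rfl
    have he2 : E (D (((⟨w, hw⟩ : Xd) : Xd) : X) - D u) = (E.comp D) w - (E.comp D) u := by
      rw [map_sub]; rfl
    rw [he1, he2] at h
    exact h
  have hfin := aux_final Xd (E.comp D) u ((ud : Xd) : X) ud.2 γd μd hγpos hμpos
    y₀ hy₀m hy₀ hLle hLge hmin
  have hinf : γd * μd * ‖u - ((ud : Xd) : X)‖ ≤ ⨅ w : Xd, ‖u - (w : X)‖ :=
    le_ciInf fun w => hfin (w : X) w.2
  have hne : γd * μd ≠ 0 := (mul_pos hγpos hμpos).ne'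
  calc ‖u - ((ud : Xd) : X)‖ = (1 / (γd * μd)) * (γd * μd * ‖u - ((ud : Xd) : X)‖) := by
        rw [one_div, inv_mul_cancel_left₀ hne]
    _ ≤ (1 / (γd * μd)) * ⨅ w : Xd, ‖u - (w : X)‖ :=
        mul_le_mul_of_nonneg_left hinf (by positivity)
end

section
/- Let X^δ ⊂ X and Y^δ ⊂ Y be finite-dimensional subspaces, ⟨·,·⟩_{Y^δ} an inner product on Y^δ, G ∈ L(X, Y'), f ∈ Y'. Then u^δ := argmin over w ∈ X^δ of (1/2) sup over nonzero v ∈ Y^δ of |(G w − f)(v)|²/‖v‖²_{Y^δ} exists, and (λ^δ, u^δ) solves the saddle point problem ⟨λ^δ, μ⟩_{Y^δ} + (G u^δ)(μ) + (G w)(λ^δ) = f(μ) for all (μ, w) ∈ Y^δ × X^δ, where λ^δ is the Riesz lift in (Y^δ, ⟨·,·⟩_{Y^δ}) of the restriction of f − G u^δ to Y^δ; conversely the second component of any solution of the saddle point problem is such a minimizer, provided the discrete inf-sup constant γ^δ is positive. -/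
open NormedSpace

section ZbDefs

variable {Y : Type*} [NormedAddCommGroup Y] [InnerProductSpace ℝ Y]
  (Yd : Submodule ℝ Y)

/-- Type synonym for `Yd`, to carry the inner product `b`. -/
def Zb : Type _ := Yd

instance : AddCommGroup (Zb Yd) := inferInstanceAs (AddCommGroup Yd)
instance : Module ℝ (Zb Yd) := inferInstanceAs (Module ℝ Yd)
instance [FiniteDimensional ℝ Yd] : FiniteDimensional ℝ (Zb Yd) :=
  inferInstanceAs (FiniteDimensional ℝ Yd)

end ZbDefs

set_option maxHeartbeats 1000000 in
/-- Existence of the discretized residual minimizer, its saddle-point characterization with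
the Riesz lift `λ^δ`, and conversely: any solution of the saddle point problem yields a
minimizer (under positivity of the discrete inf-sup constant). -/
theorem discrete_minimizer_saddle_point
    {X Y : Type*}
    [NormedAddCommGroup X] [InnerProductSpace ℝ X] [CompleteSpace X]
    [NormedAddCommGroup Y] [InnerProductSpace ℝ Y] [CompleteSpace Y]
    (G : X →L[ℝ] StrongDual ℝ Y) (f : StrongDual ℝ Y)
    (Xd : Submodule ℝ X) (Yd : Submodule ℝ Y)
    [FiniteDimensional ℝ Xd] [FiniteDimensional ℝ Yd]
    (hXdbot : Xd ≠ ⊥) (hYdbot : Yd ≠ ⊥)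
    -- the scalar product ⟨·,·⟩_{Y^δ} on Y^δ
    (b : Yd →ₗ[ℝ] Yd →ₗ[ℝ] ℝ)
    (hbsymm : ∀ v w : Yd, b v w = b w v)
    (hbpos : ∀ v : Yd, (v : Y) ≠ 0 → 0 < b v v)
    -- positivity of the discrete inf-sup constant
    (hγpos : 0 < ⨅ w : {w : Xd // (w : X) ≠ 0},
        (⨆ v : {v : Yd // (v : Y) ≠ 0},
          |G ((w : Xd) : X) ((v : Yd) : Y)| / Real.sqrt (b (v : Yd) (v : Yd)))
        / ‖G ((w : Xd) : X)‖) :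
    (∃ (ud : Xd) (lamd : Yd),
      (∀ w : Xd,
        (1/2) * (⨆ v : {v : Yd // (v : Y) ≠ 0},
            |(G ((ud : Xd) : X) - f) ((v : Yd) : Y)| ^ 2 / b (v : Yd) (v : Yd))
        ≤ (1/2) * ⨆ v : {v : Yd // (v : Y) ≠ 0},
            |(G ((w : Xd) : X) - f) ((v : Yd) : Y)| ^ 2 / b (v : Yd) (v : Yd)) ∧
      -- λ^δ is the Riesz lift of (f − G u^δ)|_{Y^δ}
      (∀ μ : Yd, b lamd μ = f (μ : Y) - G ((ud : Xd) : X) (μ : Y)) ∧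
      -- saddle point equations
      (∀ (μ : Yd) (w : Xd),
        b lamd μ + G ((ud : Xd) : X) (μ : Y) + G ((w : Xd) : X) ((lamd : Yd) : Y)
          = f (μ : Y))) ∧
    -- converse: the second component of any solution of the saddle point problem minimizes
    (∀ (lamd : Yd) (ud : Xd),
      (∀ (μ : Yd) (w : Xd),
        b lamd μ + G ((ud : Xd) : X) (μ : Y) + G ((w : Xd) : X) ((lamd : Yd) : Y)
          = f (μ : Y)) →
      ∀ w : Xd,
        (1/2) * (⨆ v : {v : Yd // (v : Y) ≠ 0},
            |(G ((ud : Xd) : X) - f) ((v : Yd) : Y)| ^ 2 / b (v : Yd) (v : Yd))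
        ≤ (1/2) * ⨆ v : {v : Yd // (v : Y) ≠ 0},
            |(G ((w : Xd) : X) - f) ((v : Yd) : Y)| ^ 2 / b (v : Yd) (v : Yd)) := by
  classical
  -- set up the inner product space structure on the type synonym `Zb Yd`
  letI core : InnerProductSpace.Core ℝ (Zb Yd) :=
    { inner := fun x y => b x y
      conj_inner_symm := fun x y => by simpa using hbsymm y x
      re_inner_nonneg := fun x => by
        rcases eq_or_ne (x : Yd) 0 with h | h
        · simp [h]
          exact le_of_eq (LinearMap.map_zero₂ b _).symm
        · exact le_of_lt (by simpa using hbpos x (fun hc => h (by exact Subtype.ext hc)))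
      add_left := fun x y z => LinearMap.map_add₂ b x y z
      smul_left := fun x y r => by
        have e := LinearMap.map_smul₂ b r (x : Yd) y
        rw [conj_trivial, ← smul_eq_mul]
        exact e
      definite := fun x hx => by
        by_contra h
        exact absurd hx (ne_of_gt (hbpos x (fun hc => h (by exact Subtype.ext hc)))) }
  letI : NormedAddCommGroup (Zb Yd) := core.toNormedAddCommGroup
  letI : InnerProductSpace ℝ (Zb Yd) := InnerProductSpace.ofCore core.toCore
  haveI : CompleteSpace (Zb Yd) := FiniteDimensional.complete ℝ _
  -- the Riesz lift
  let r : StrongDual ℝ Y → Zb Yd := fun g =>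
    (InnerProductSpace.toDual ℝ (Zb Yd)).symm
      (LinearMap.toContinuousLinearMap
        ((g.toLinearMap.comp Yd.subtype : Yd →ₗ[ℝ] ℝ) : Zb Yd →ₗ[ℝ] ℝ))
  have hr : ∀ (g : StrongDual ℝ Y) (μ : Yd), b (r g) μ = g (μ : Y) := by
    intro g μ
    have : (inner ℝ (r g) (μ : Zb Yd) : ℝ) = g (μ : Y) := by
      exact InnerProductSpace.toDual_symm_apply (𝕜 := ℝ) (E := Zb Yd)
    exact this
  -- conversion functions between the synonym and the submodule
  let toZ : Yd → Zb Yd := fun v => v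
  let toYd : Zb Yd → Yd := fun z => z
  -- injectivity of `b` in the first argument
  have binj : ∀ x y : Zb Yd, (∀ μ : Yd, b x μ = b y μ) → x = y := by
    intro x y h
    have key : ∀ x' y' : Yd, (∀ μ : Yd, b x' μ = b y' μ) → b (x' - y') (x' - y') = 0 := by
      intro x' y' h'
      simp only [map_sub, LinearMap.sub_apply]
      linarith [h' x', h' y']
    have hd : b (x - y) (x - y) = 0 := key x y h
    have := core.definite (x - y) hd
    exact sub_eq_zero.mp this
  -- the discrete residual lift
  let lamOf : Xd → Zb Yd := fun w => r (f - G (w : X))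
  have hlam : ∀ (w : Xd) (μ : Yd), b (lamOf w) μ = f (μ : Y) - G (w : X) (μ : Y) := by
    intro w μ
    rw [hr]
    simp [ContinuousLinearMap.sub_apply]
  -- nonempty index type
  haveI hne : Nonempty {v : Yd // (v : Y) ≠ 0} := by
    obtain ⟨y0, hy0m, hy0⟩ := Submodule.exists_mem_ne_zero_of_ne_bot hYdbot
    exact ⟨⟨⟨y0, hy0m⟩, hy0⟩⟩
  -- Cauchy-Schwarz bound on the terms of the sup
  have hbound : ∀ (l : Zb Yd) (v : {v : Yd // (v : Y) ≠ 0}),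
      (b l (v : Yd))^2 / b (v : Yd) (v : Yd) ≤ b l l := by
    intro l v
    rw [div_le_iff₀ (hbpos (v : Yd) v.2), sq]
    exact real_inner_mul_inner_self_le l ((v : Yd) : Zb Yd)
  -- the sup formula : the sup equals the squared b-norm of the residual lift
  have hS : ∀ w : Xd,
      (⨆ v : {v : Yd // (v : Y) ≠ 0},
          |(G ((w : Xd) : X) - f) ((v : Yd) : Y)| ^ 2 / b (v : Yd) (v : Yd))
      = b (lamOf w) (lamOf w) := by
    intro w
    have hterm : ∀ v : {v : Yd // (v : Y) ≠ 0},
        |(G ((w : Xd) : X) - f) ((v : Yd) : Y)| ^ 2 / b (v : Yd) (v : Yd)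
          = (b (lamOf w) (v : Yd))^2 / b (v : Yd) (v : Yd) := by
      intro v
      have h1 : (G ((w : Xd) : X) - f) ((v : Yd) : Y) = -(b (lamOf w) (v : Yd)) := by
        rw [hlam]
        simp [ContinuousLinearMap.sub_apply]
      rw [h1, abs_neg, sq_abs]
    rw [iSup_congr hterm]
    rcases eq_or_ne (lamOf w) 0 with h0 | h0
    · have hz : ∀ v : {v : Yd // (v : Y) ≠ 0},
          (b (lamOf w) (v : Yd))^2 / b (v : Yd) (v : Yd) = 0 := by
        intro v
        rw [h0]
        simp [show b (0 : Zb Yd) = 0 from map_zero b]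
      rw [iSup_congr hz, ciSup_const, h0]
      exact (LinearMap.map_zero₂ b _).symm
    · apply le_antisymm
      · exact ciSup_le fun v => hbound (lamOf w) v
      · have hBdd : BddAbove (Set.range fun v : {v : Yd // (v : Y) ≠ 0} =>
            (b (lamOf w) (v : Yd))^2 / b (v : Yd) (v : Yd)) := by
          refine ⟨b (lamOf w) (lamOf w), ?_⟩
          rintro x ⟨v, rfl⟩
          exact hbound (lamOf w) v
        have hl0 : b (lamOf w) (lamOf w) ≠ 0 :=
          ne_of_gt (hbpos (lamOf w) (fun hc => h0 (Subtype.ext hc)))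
        let v0 : {v : Yd // (v : Y) ≠ 0} := ⟨lamOf w, fun hc => h0 (Subtype.ext hc)⟩
        have hval : (b (lamOf w) (v0 : Yd))^2 / b (v0 : Yd) (v0 : Yd)
            = b (lamOf w) (lamOf w) := by
          show (b (lamOf w) (lamOf w))^2 / b (lamOf w) (lamOf w) = b (lamOf w) (lamOf w)
          rw [sq, mul_div_assoc, div_self hl0, mul_one]
        calc b (lamOf w) (lamOf w) = _ := hval.symm
          _ ≤ _ := le_ciSup hBdd v0
  -- nonnegativity of b on the diagonal
  have hbnn : ∀ x : Zb Yd, 0 ≤ b x x := by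
    intro x
    have := core.re_inner_nonneg x
    simp only [RCLike.re_to_real] at this
    exact this
  -- the converse part
  have hmin : ∀ (lamd : Yd) (ud : Xd),
      (∀ (μ : Yd) (w : Xd),
        b lamd μ + G ((ud : Xd) : X) (μ : Y) + G ((w : Xd) : X) ((lamd : Yd) : Y)
          = f (μ : Y)) →
      ∀ w : Xd,
        (1/2) * (⨆ v : {v : Yd // (v : Y) ≠ 0},
            |(G ((ud : Xd) : X) - f) ((v : Yd) : Y)| ^ 2 / b (v : Yd) (v : Yd))
        ≤ (1/2) * ⨆ v : {v : Yd // (v : Y) ≠ 0},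
            |(G ((w : Xd) : X) - f) ((v : Yd) : Y)| ^ 2 / b (v : Yd) (v : Yd) := by
    intro lamd ud hsad w
    have h1 : ∀ μ : Yd, b lamd μ = f (μ : Y) - G ((ud : Xd) : X) (μ : Y) := by
      intro μ
      have h := hsad μ 0
      have h0 : G (((0 : Xd) : Xd) : X) ((lamd : Yd) : Y) = 0 := by
        simp
      rw [h0] at h
      linarith
    have h2 : ∀ w' : Xd, G ((w' : Xd) : X) ((lamd : Yd) : Y) = 0 := by
      intro w'
      have h := hsad 0 w'
      have hb0 : b lamd (0 : Yd) = 0 := by simp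
      rw [hb0] at h
      simp only [Submodule.coe_zero, map_zero] at h
      linarith
    have hld : toZ lamd = lamOf ud :=
      binj _ _ (fun μ => by
        show b lamd μ = b (lamOf ud) μ
        rw [h1 μ, hlam])
    set d : Zb Yd := lamOf w - toZ lamd with hd
    have hdb : ∀ μ : Yd, b d μ = G (((ud - w : Xd) : Xd) : X) (μ : Y) := by
      intro μ
      have hsub : b d μ = b (lamOf w) μ - b lamd μ := by
        rw [hd]
        exact LinearMap.map_sub₂ b _ _ μ
      rw [hsub, hlam, h1]
      have e : ((ud - w : Xd) : X) = (ud : X) - (w : X) := rfl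
      rw [e, map_sub]
      simp [ContinuousLinearMap.sub_apply]
    have hzero : b d lamd = 0 := (hdb lamd).trans (h2 (ud - w))
    have hzero2 : b lamd d = 0 := by
      exact (hbsymm lamd d).trans hzero
    have hexp : b (lamOf w) (lamOf w) = b lamd lamd + b lamd d + b d lamd + b d d := by
      have hw : lamOf w = toZ lamd + d := by rw [hd]; abel
      have key : ∀ x y : Yd, b (x + y) (x + y) = b x x + b x y + b y x + b y y := by
        intro x y
        rw [map_add]
        simp only [LinearMap.add_apply, map_add]
        ring
      calc b (lamOf w) (lamOf w) = b (toZ lamd + d) (toZ lamd + d) := by rw [hw]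
        _ = b lamd lamd + b lamd d + b d lamd + b d d := key lamd d
    have hdd : 0 ≤ b d d := hbnn d
    have hbl : b (lamOf ud) (lamOf ud) = b lamd lamd := by rw [← hld]
    rw [hS ud, hS w]
    linarith [hzero, hzero2, hdd, hexp, hbl]
  refine ⟨?_, hmin⟩
  -- construct the minimizer via the orthogonal projection
  let T : Xd →ₗ[ℝ] Zb Yd :=
    { toFun := fun w => r (G (w : X))
      map_add' := fun w w' => binj _ _ fun μ => by
        have e : b (r (G ((w + w' : Xd) : X))) μ = G ((w + w' : Xd) : X) (μ : Y) := hr _ μ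
        have e2 : b (r (G (w : X)) + r (G (w' : X))) μ
            = b (r (G (w : X))) μ + b (r (G (w' : X))) μ := by
          exact LinearMap.map_add₂ b _ _ μ
        rw [e, e2, hr, hr]
        have e3 : ((w + w' : Xd) : X) = (w : X) + (w' : X) := rfl
        rw [e3, map_add]
        simp [ContinuousLinearMap.add_apply]
      map_smul' := fun c w => binj _ _ fun μ => by
        have e : b (r (G ((c • w : Xd) : X))) μ = G ((c • w : Xd) : X) (μ : Y) := hr _ μ
        have e2 : b (c • r (G (w : X))) μ = c * b (r (G (w : X))) μ := by
          exact LinearMap.map_smul₂ b c _ μ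
        rw [RingHom.id_apply, e, e2, hr]
        have e3 : ((c • w : Xd) : X) = c • (w : X) := rfl
        rw [e3, map_smul]
        simp }
  have hT : ∀ (w : Xd) (μ : Yd), b (T w) μ = G ((w : Xd) : X) (μ : Y) := fun w μ => hr _ μ
  let K : Submodule ℝ (Zb Yd) := LinearMap.range T
  haveI : CompleteSpace K := FiniteDimensional.complete ℝ _
  let p := K.orthogonalProjectionOnto (r f)
  have hq : r f - (p : Zb Yd) ∈ Kᗮ := by
    have := K.sub_starProjection_mem_orthogonal (r f)
    rwa [Submodule.starProjection_apply] at this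
  obtain ⟨ud, hud⟩ := LinearMap.mem_range.mp p.2
  set lamd : Zb Yd := r f - T ud with hlamdef
  let lamdY : (Yd : Submodule ℝ Y) := toYd lamd
  have hlamd : ∀ μ : Yd, b lamdY μ = f (μ : Y) - G ((ud : Xd) : X) (μ : Y) := by
    intro μ
    have e : b lamdY μ = b (r f) μ - b (T ud) μ := by
      show b lamd μ = b (r f) μ - b (T ud) μ
      rw [hlamdef]
      exact LinearMap.map_sub₂ b _ _ μ
    rw [e, hr, hT]
  have hGlam : ∀ w : Xd, G ((w : Xd) : X) ((lamdY : Yd) : Y) = 0 := by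
    intro w
    have hm : T w ∈ K := LinearMap.mem_range_self T w
    have horth : (inner ℝ (T w) (r f - (p : Zb Yd)) : ℝ) = 0 :=
      (Submodule.mem_orthogonal K _).mp hq (T w) hm
    have hl : lamd = r f - (p : Zb Yd) := by rw [hlamdef, hud]
    have hb0 : b (T w) lamdY = 0 := by
      show b (T w) lamd = 0
      rw [hl]
      exact horth
    rw [← hT w lamdY]
    exact hb0
  have hsad : ∀ (μ : Yd) (w : Xd),
      b lamdY μ + G ((ud : Xd) : X) (μ : Y) + G ((w : Xd) : X) ((lamdY : Yd) : Y)
        = f (μ : Y) := by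
    intro μ w
    rw [hlamd μ, hGlam w]
    ring
  exact ⟨ud, lamdY, hmin lamdY ud hsad, hlamd, hsad⟩
end

section
/- If Y^δ = Y and X̂^δ = X in the 3×3 block system ⟨θ, τ⟩_X − (Gτ)(λ) = 0 (τ ∈ X), −(Gθ)(μ) − (Gu^δ)(μ) = −f(μ) (μ ∈ Y), −(Gw)(λ) = 0 (w ∈ X^δ), where G ∈ Lis(X, Y') and u = G⁻¹f, then u^δ is the best approximation to u from X^δ with respect to ‖·‖_X, and θ = u − u^δ. -/
open NormedSpace RealInnerProductSpace

/-- With `Y^δ = Y` and `X̂^δ = X` in the 3×3 block system, `u^δ` is the best approximation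
to `u` from `X^δ` w.r.t. `‖·‖_X`, and `θ = u − u^δ`. -/
theorem full_test_spaces_best_approximation
    {X Y : Type*}
    [NormedAddCommGroup X] [InnerProductSpace ℝ X] [CompleteSpace X]
    [NormedAddCommGroup Y] [InnerProductSpace ℝ Y] [CompleteSpace Y]
    (G : X ≃L[ℝ] StrongDual ℝ Y) (f : StrongDual ℝ Y) (u : X) (hu : u = G.symm f)
    (Xd : Submodule ℝ X) (hXdclosed : IsClosed (Xd : Set X))
    (θ : X) (lam : Y) (ud : Xd)
    (h1 : ∀ τ : X, ⟪θ, τ⟫ - G τ lam = 0)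
    (h2 : ∀ μ : Y, -(G θ μ) - G ((ud : Xd) : X) μ = -(f μ))
    (h3 : ∀ w : Xd, -(G ((w : Xd) : X) lam) = 0) :
    θ = u - (ud : X) ∧ ∀ w : Xd, ‖u - (ud : X)‖ ≤ ‖u - (w : X)‖ := by
  have hGf : G (θ + (ud : X)) = f := by
    ext μ
    have := h2 μ
    simp only [map_add, ContinuousLinearMap.add_apply]
    linarith
  have hsum : θ + (ud : X) = u := by
    rw [hu, ← hGf]; simp
  have hθ : θ = u - (ud : X) := by
    rw [← hsum]; abel
  refine ⟨hθ, fun w => ?_⟩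
  have horth : ∀ v : Xd, ⟪u - (ud : X), (v : X)⟫ = 0 := by
    intro v
    have := h1 (v : X)
    have h3' := h3 v
    rw [← hθ]
    linarith
  have key : ‖u - (w : X)‖ ^ 2 = ‖u - (ud : X)‖ ^ 2 + ‖((ud : X) - (w : X))‖ ^ 2 := by
    have hdecomp : u - (w : X) = (u - (ud : X)) + ((ud : X) - (w : X)) := by abel
    have hmem : (ud : X) - (w : X) ∈ Xd := Xd.sub_mem ud.2 w.2
    rw [hdecomp, norm_add_sq_real, horth ⟨_, hmem⟩]
    ring
  have h2' : ‖u - (ud : X)‖ ^ 2 ≤ ‖u - (w : X)‖ ^ 2 := by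
    rw [key]; nlinarith [sq_nonneg ‖((ud : X) - (w : X))‖]
  nlinarith [norm_nonneg (u - (ud : X)), norm_nonneg (u - (w : X))]
end

section
/- A posteriori bounds: let G ∈ Lis(X, Y'), u = G⁻¹ f, and let (θ^δ, λ^δ, u^δ) ∈ X̂^δ × Y^δ × X^δ solve the 3×3 block system of the practical MINRES method with optimal test norm. Let Π^δ ∈ L(Y, Y^δ) be a Fortin interpolator with (G X^δ)(ran(Id − Π^δ)) = 0, and set osc^δ(f) := ‖G⁻¹ (Id − Π^δ)' f‖_X. Assume μ^δ > 0. Then μ^δ ‖θ^δ‖_X ≤ ‖u − u^δ‖_X ≤ ‖G' Π^δ (G')⁻¹‖_{L(X',X')} ‖θ^δ‖_X + osc^δ(f). -/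
open NormedSpace RealInnerProductSpace

set_option maxHeartbeats 1000000 in
/-- A posteriori bounds:
`μ^δ ‖θ^δ‖_X ≤ ‖u − u^δ‖_X ≤ ‖G' Π^δ (G')⁻¹‖ ‖θ^δ‖_X + osc^δ(f)`. -/
theorem a_posteriori_bounds
    {X Y : Type*}
    [NormedAddCommGroup X] [InnerProductSpace ℝ X] [CompleteSpace X]
    [NormedAddCommGroup Y] [InnerProductSpace ℝ Y] [CompleteSpace Y]
    (G : X ≃L[ℝ] StrongDual ℝ Y) (f : StrongDual ℝ Y) (u : X) (hu : G u = f)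
    (Gp : Y ≃L[ℝ] StrongDual ℝ X)
    (hGp : ∀ (v : Y) (x : X), Gp v x = G x v)
    (Xd : Submodule ℝ X) (Yd : Submodule ℝ Y) (Xhat : Submodule ℝ X)
    (hXdclosed : IsClosed (Xd : Set X)) (hYdclosed : IsClosed (Yd : Set Y))
    (hXhatclosed : IsClosed (Xhat : Set X))
    (hXdbot : Xd ≠ ⊥) (hYdbot : Yd ≠ ⊥) (hXhatbot : Xhat ≠ ⊥)
    -- the solution (θ^δ, λ^δ, u^δ) of the 3×3 block system
    (θd : Xhat) (lamd : Yd) (ud : Xd)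
    (h1 : ∀ τ : Xhat, ⟪((θd : Xhat) : X), ((τ : Xhat) : X)⟫
        - G ((τ : Xhat) : X) ((lamd : Yd) : Y) = 0)
    (h2 : ∀ μ : Yd, -(G ((θd : Xhat) : X) ((μ : Yd) : Y))
        - G ((ud : Xd) : X) ((μ : Yd) : Y) = -(f ((μ : Yd) : Y)))
    (h3 : ∀ w : Xd, -(G ((w : Xd) : X) ((lamd : Yd) : Y)) = 0)
    -- the Fortin interpolator
    (Pid : Y →L[ℝ] Y) (hPidran : ∀ v : Y, Pid v ∈ Yd)
    (hFortin : ∀ (w : Xd) (v : Y), G ((w : Xd) : X) (v - Pid v) = 0)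
    (μd : ℝ)
    (hμdef : μd = ⨅ v : {v : Yd // (v : Y) ≠ 0},
        (⨆ w : {w : Xhat // (w : X) ≠ 0},
          |G ((w : Xhat) : X) ((v : Yd) : Y)| / ‖((w : Xhat) : X)‖)
        / ‖Gp ((v : Yd) : Y)‖)
    (hμpos : 0 < μd) :
    μd * ‖((θd : Xhat) : X)‖ ≤ ‖u - (ud : X)‖ ∧
    ‖u - (ud : X)‖
      ≤ ‖(Gp : Y →L[ℝ] StrongDual ℝ X).comp (Pid.comp (Gp.symm : StrongDual ℝ X →L[ℝ] Y))‖
          * ‖((θd : Xhat) : X)‖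
        + ‖G.symm (f.comp (ContinuousLinearMap.id ℝ Y - Pid))‖ := by
  -- the residual identity: G θd μ = G (u - ud) μ for μ ∈ Yd
  have hres : ∀ μ : Yd, G ((θd : Xhat) : X) ((μ : Yd) : Y)
      = G (u - (ud : X)) ((μ : Yd) : Y) := by
    intro μ
    have h := h2 μ
    have hf : f ((μ : Yd) : Y) = G u ((μ : Yd) : Y) := by rw [hu]
    have hsub : G (u - (ud : X)) ((μ : Yd) : Y)
        = G u ((μ : Yd) : Y) - G ((ud : Xd) : X) ((μ : Yd) : Y) := by
      rw [map_sub]; rfl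
    rw [hsub]; linarith
  constructor
  · -- lower bound
    by_cases hθ0 : ((θd : Xhat) : X) = 0
    · simpa [hθ0] using norm_nonneg (u - (ud : X))
    have hθpos : 0 < ‖((θd : Xhat) : X)‖ := norm_pos_iff.mpr hθ0
    have hsq : ‖((θd : Xhat) : X)‖ ^ 2 = G ((θd : Xhat) : X) ((lamd : Yd) : Y) := by
      have h := h1 θd
      have h' : ⟪((θd : Xhat) : X), ((θd : Xhat) : X)⟫ = ‖((θd : Xhat) : X)‖ ^ 2 :=
        real_inner_self_eq_norm_sq _
      linarith
    have hlam : ((lamd : Yd) : Y) ≠ 0 := by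
      intro h0
      rw [h0] at hsq
      simp only [map_zero] at hsq
      nlinarith [pow_pos hθpos 2]
    have hGplam : (0 : ℝ) < ‖Gp ((lamd : Yd) : Y)‖ := by
      rw [norm_pos_iff]
      intro h0
      exact hlam (Gp.injective (by simpa using h0))
    -- the sup for v = lamd
    have hnonempty : Nonempty {w : Xhat // (w : X) ≠ 0} := by
      obtain ⟨x, hx, hx0⟩ := Submodule.exists_mem_ne_zero_of_ne_bot hXhatbot
      exact ⟨⟨⟨x, hx⟩, hx0⟩⟩
    have hSle : (⨆ w : {w : Xhat // (w : X) ≠ 0},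
        |G ((w : Xhat) : X) ((lamd : Yd) : Y)| / ‖((w : Xhat) : X)‖)
        ≤ ‖((θd : Xhat) : X)‖ := by
      apply ciSup_le
      intro w
      have hw : (0 : ℝ) < ‖((w.1 : Xhat) : X)‖ := norm_pos_iff.mpr w.2
      rw [div_le_iff₀ hw]
      have h := h1 w.1
      have : G ((w.1 : Xhat) : X) ((lamd : Yd) : Y)
          = ⟪((θd : Xhat) : X), ((w.1 : Xhat) : X)⟫ := by linarith
      rw [this]
      exact abs_real_inner_le_norm _ _
    have hinf : μd ≤ (⨆ w : {w : Xhat // (w : X) ≠ 0},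
        |G ((w : Xhat) : X) ((lamd : Yd) : Y)| / ‖((w : Xhat) : X)‖)
        / ‖Gp ((lamd : Yd) : Y)‖ := by
      rw [hμdef]
      exact ciInf_le ⟨0, by
        rintro y ⟨v, rfl⟩
        exact div_nonneg (Real.iSup_nonneg fun w =>
          div_nonneg (abs_nonneg _) (norm_nonneg _)) (norm_nonneg _)⟩
        (⟨lamd, hlam⟩ : {v : Yd // (v : Y) ≠ 0})
    rw [le_div_iff₀ hGplam] at hinf
    have hkey : μd * ‖Gp ((lamd : Yd) : Y)‖ ≤ ‖((θd : Xhat) : X)‖ := hinf.trans hSle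
    have hbound : ‖((θd : Xhat) : X)‖ ^ 2
        ≤ ‖Gp ((lamd : Yd) : Y)‖ * ‖u - (ud : X)‖ := by
      rw [hsq, hres lamd, ← hGp]
      calc Gp ((lamd : Yd) : Y) (u - (ud : X))
          ≤ |Gp ((lamd : Yd) : Y) (u - (ud : X))| := le_abs_self _
        _ = ‖Gp ((lamd : Yd) : Y) (u - (ud : X))‖ := (Real.norm_eq_abs _).symm
        _ ≤ ‖Gp ((lamd : Yd) : Y)‖ * ‖u - (ud : X)‖ :=
            (Gp ((lamd : Yd) : Y)).le_opNorm _
    nlinarith [mul_le_mul_of_nonneg_left hbound hμpos.le,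
      mul_le_mul_of_nonneg_right hkey (norm_nonneg (u - (ud : X))), hθpos]
  · -- upper bound
    set T := (Gp : Y →L[ℝ] StrongDual ℝ X).comp (Pid.comp (Gp.symm : StrongDual ℝ X →L[ℝ] Y)) with hT
    set x₂ : X := G.symm (f.comp (ContinuousLinearMap.id ℝ Y - Pid)) with hx2
    set x₁ : X := (u - (ud : X)) - x₂ with hx1
    have hkey : ∀ φ : StrongDual ℝ X, φ x₁ = T φ ((θd : Xhat) : X) := by
      intro φ
      set v : Y := Gp.symm φ with hv
      have hφ : φ = Gp v := by rw [hv, Gp.apply_symm_apply]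
      have hud : G ((ud : Xd) : X) v = G ((ud : Xd) : X) (Pid v) := by
        have h := hFortin ud v
        have h' : G ((ud : Xd) : X) v - G ((ud : Xd) : X) (Pid v) = 0 := by
          rw [← map_sub]; exact h
        linarith
      have hθ : G ((θd : Xhat) : X) (Pid v) = G (u - (ud : X)) (Pid v) :=
        hres ⟨Pid v, hPidran v⟩
      have hx2v : G x₂ v = f v - f (Pid v) := by
        rw [hx2, G.apply_symm_apply]
        simp [map_sub]
      have hTφ : T φ ((θd : Xhat) : X) = G ((θd : Xhat) : X) (Pid v) := by
        rw [hT, ← hGp]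
        simp [hv]
      rw [hTφ, hθ]
      have hGe : G (u - (ud : X)) (Pid v)
          = G u (Pid v) - G ((ud : Xd) : X) (Pid v) := by rw [map_sub]; rfl
      have hGe' : G (u - (ud : X)) v
          = G u v - G ((ud : Xd) : X) v := by rw [map_sub]; rfl
      have hφx : φ x₁ = G (u - (ud : X)) v - G x₂ v := by
        rw [hφ, hGp, hx1, map_sub]; rfl
      have hfu : ∀ y : Y, G u y = f y := by intro y; rw [hu]
      rw [hφx, hGe, hGe', hx2v, hfu, hfu, hud]
      ring
    have hx1le : ‖x₁‖ ≤ ‖T‖ * ‖((θd : Xhat) : X)‖ := by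
      by_cases h0 : x₁ = 0
      · simp only [h0, norm_zero]
        exact mul_nonneg (ContinuousLinearMap.opNorm_nonneg T) (norm_nonneg _)
      have hx1pos : 0 < ‖x₁‖ := norm_pos_iff.mpr h0
      have hsq : ‖x₁‖ ^ 2 = T (innerSL ℝ x₁) ((θd : Xhat) : X) := by
        rw [← hkey (innerSL ℝ x₁)]
        simp [real_inner_self_eq_norm_sq]
      have hle : T (innerSL ℝ x₁) ((θd : Xhat) : X)
          ≤ ‖T‖ * ‖x₁‖ * ‖((θd : Xhat) : X)‖ := by
        calc T (innerSL ℝ x₁) ((θd : Xhat) : X)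
            ≤ ‖T (innerSL ℝ x₁) ((θd : Xhat) : X)‖ := le_abs_self _
          _ ≤ ‖T (innerSL ℝ x₁)‖ * ‖((θd : Xhat) : X)‖ :=
              (T (innerSL ℝ x₁)).le_opNorm _
          _ ≤ ‖T‖ * ‖innerSL ℝ x₁‖ * ‖((θd : Xhat) : X)‖ :=
              mul_le_mul_of_nonneg_right (T.le_opNorm _) (norm_nonneg _)
          _ = ‖T‖ * ‖x₁‖ * ‖((θd : Xhat) : X)‖ := by rw [innerSL_apply_norm]
      nlinarith
    calc ‖u - (ud : X)‖ = ‖x₁ + x₂‖ := by rw [hx1]; congr 1; abel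
      _ ≤ ‖x₁‖ + ‖x₂‖ := norm_add_le _ _
      _ ≤ ‖T‖ * ‖((θd : Xhat) : X)‖ + ‖x₂‖ := by linarith
end

section
/- The key identity for the estimator: with (θ^δ, λ^δ, u^δ) solving the 3×3 block system, it holds that ‖θ^δ‖_X = sup over nonzero v ∈ Y^δ of |(f − G u^δ)(v)| / ‖G' v‖_{(X̂^δ)'}. -/
open NormedSpace RealInnerProductSpace

/-- The key identity for the estimator:
`‖θ^δ‖_X = sup_{0≠v∈Y^δ} |(f − G u^δ)(v)| / ‖G' v‖_{(X̂^δ)'}`. -/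
theorem estimator_identity
    {X Y : Type*}
    [NormedAddCommGroup X] [InnerProductSpace ℝ X] [CompleteSpace X]
    [NormedAddCommGroup Y] [InnerProductSpace ℝ Y] [CompleteSpace Y]
    (G : X →L[ℝ] StrongDual ℝ Y) (f : StrongDual ℝ Y)
    (Xd : Submodule ℝ X) (Yd : Submodule ℝ Y) (Xhat : Submodule ℝ X)
    [FiniteDimensional ℝ Xd] [FiniteDimensional ℝ Yd] [FiniteDimensional ℝ Xhat]
    (hYdbot : Yd ≠ ⊥)
    (θd : Xhat) (lamd : Yd) (ud : Xd)
    -- the 3×3 block system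
    (h1 : ∀ τ : Xhat, ⟪((θd : Xhat) : X), ((τ : Xhat) : X)⟫
        - G ((τ : Xhat) : X) ((lamd : Yd) : Y) = 0)
    (h2 : ∀ μ : Yd, -(G ((θd : Xhat) : X) ((μ : Yd) : Y))
        - G ((ud : Xd) : X) ((μ : Yd) : Y) = -(f ((μ : Yd) : Y)))
    (h3 : ∀ w : Xd, -(G ((w : Xd) : X) ((lamd : Yd) : Y)) = 0)
    -- injectivity of v ↦ (G'v)|_{X̂^δ} on Y^δ, so the discretized dual norm is a norm
    (hinj : ∀ v : Yd, (v : Y) ≠ 0 → ∃ w : Xhat, G ((w : Xhat) : X) ((v : Yd) : Y) ≠ 0) :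
    ‖((θd : Xhat) : X)‖
      = ⨆ v : {v : Yd // (v : Y) ≠ 0},
          |f ((v : Yd) : Y) - G ((ud : Xd) : X) ((v : Yd) : Y)|
            / (⨆ w : {w : Xhat // (w : X) ≠ 0},
                |G ((w : Xhat) : X) ((v : Yd) : Y)| / ‖((w : Xhat) : X)‖) := by
  classical
  set θ : X := ((θd : Xhat) : X) with hθdef
  have key2 : ∀ v : Yd, f ((v : Yd) : Y) - G ((ud : Xd) : X) ((v : Yd) : Y)
      = G θ ((v : Yd) : Y) := by
    intro v; have := h2 v; linarith
  have key1 : ∀ τ : Xhat, G ((τ : Xhat) : X) ((lamd : Yd) : Y)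
      = ⟪θ, ((τ : Xhat) : X)⟫ := by
    intro τ; have := h1 τ; linarith
  set N : Yd → ℝ := fun v => ⨆ w : {w : Xhat // (w : X) ≠ 0},
      |G ((w : Xhat) : X) ((v : Yd) : Y)| / ‖((w : Xhat) : X)‖ with hNdef
  have hne : Nonempty {v : Yd // (v : Y) ≠ 0} := by
    obtain ⟨y, hy, hy0⟩ := Submodule.exists_mem_ne_zero_of_ne_bot hYdbot
    exact ⟨⟨⟨y, hy⟩, hy0⟩⟩
  have hgoal : ‖θ‖ = ⨆ v : {v : Yd // (v : Y) ≠ 0},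
      |G θ (((v : Yd) : Yd) : Y)| / N (v : Yd) := by
    by_cases hθ0 : θ = 0
    · rw [hθ0]
      simp only [map_zero, ContinuousLinearMap.zero_apply, abs_zero, zero_div, norm_zero]
      exact (ciSup_const).symm
    · have hθpos : 0 < ‖θ‖ := norm_pos_iff.mpr hθ0
      have Nbdd : ∀ v : Yd, BddAbove (Set.range fun w : {w : Xhat // (w : X) ≠ 0} =>
          |G ((w : Xhat) : X) ((v : Yd) : Y)| / ‖((w : Xhat) : X)‖) := by
        intro v
        refine ⟨‖G‖ * ‖((v : Yd) : Y)‖, ?_⟩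
        rintro x ⟨w, rfl⟩
        have hw : (0:ℝ) < ‖((w : Xhat) : X)‖ := norm_pos_iff.mpr w.2
        rw [div_le_iff₀ hw]
        calc |G ((w:Xhat):X) ((v:Yd):Y)| = ‖G ((w:Xhat):X) ((v:Yd):Y)‖ :=
              (Real.norm_eq_abs _).symm
          _ ≤ ‖G ((w:Xhat):X)‖ * ‖((v:Yd):Y)‖ := (G _).le_opNorm _
          _ ≤ (‖G‖ * ‖((w:Xhat):X)‖) * ‖((v:Yd):Y)‖ := by
              have := G.le_opNorm ((w:Xhat):X)
              nlinarith [norm_nonneg ((v:Yd):Y), norm_nonneg (G ((w:Xhat):X))]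
          _ = ‖G‖ * ‖((v:Yd):Y)‖ * ‖((w:Xhat):X)‖ := by ring
      have Npos : ∀ v : Yd, (v : Y) ≠ 0 → 0 < N v := by
        intro v hv
        obtain ⟨w, hw⟩ := hinj v hv
        have hwne : ((w:Xhat):X) ≠ 0 := by
          intro h
          apply hw
          rw [h]; simp
        have hle := le_ciSup (Nbdd v) ⟨w, hwne⟩
        have hpos : 0 < |G ((w:Xhat):X) ((v:Yd):Y)| / ‖((w:Xhat):X)‖ :=
          div_pos (abs_pos.mpr hw) (norm_pos_iff.mpr hwne)
        exact lt_of_lt_of_le hpos hle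
      have Nle : ∀ v : Yd, |G θ ((v:Yd):Y)| / ‖θ‖ ≤ N v := by
        intro v
        exact le_ciSup (Nbdd v) ⟨θd, hθ0⟩
      have termle : ∀ v : {v : Yd // (v : Y) ≠ 0},
          |G θ (((v:Yd):Yd):Y)| / N (v:Yd) ≤ ‖θ‖ := by
        intro v
        rw [div_le_iff₀ (Npos v.1 v.2)]
        have h := Nle v.1
        rw [div_le_iff₀ hθpos] at h
        linarith
      have bdd : BddAbove (Set.range fun v : {v : Yd // (v : Y) ≠ 0} =>
          |G θ (((v:Yd):Yd):Y)| / N (v:Yd)) := ⟨‖θ‖, by rintro x ⟨v, rfl⟩; exact termle v⟩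
      have hGθl : G θ ((lamd : Yd) : Y) = ‖θ‖ ^ 2 := by
        have h : G θ ((lamd : Yd) : Y) = ⟪θ, θ⟫ := key1 θd
        rw [h, real_inner_self_eq_norm_sq]
      have hlam : ((lamd : Yd) : Y) ≠ 0 := by
        intro h
        rw [h, map_zero] at hGθl
        exact hθ0 (norm_eq_zero.mp (by nlinarith [norm_nonneg θ]))
      have Nlamd : N lamd = ‖θ‖ := by
        apply le_antisymm
        · haveI : Nonempty {w : Xhat // (w:X) ≠ 0} := ⟨⟨θd, hθ0⟩⟩
          apply ciSup_le
          intro w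
          rw [key1 (w : Xhat), div_le_iff₀ (norm_pos_iff.mpr w.2)]
          exact abs_real_inner_le_norm θ _
        · have h : |G θ ((lamd:Yd):Y)| / ‖θ‖ ≤ N lamd := le_ciSup (Nbdd lamd) ⟨θd, hθ0⟩
          have e : |G θ ((lamd:Yd):Y)| / ‖θ‖ = ‖θ‖ := by
            rw [hGθl, abs_of_nonneg (by positivity), sq]
            field_simp
          rwa [e] at h
      apply le_antisymm
      · have h := le_ciSup bdd ⟨lamd, hlam⟩
        have e : |G θ ((lamd:Yd):Y)| / N lamd = ‖θ‖ := by
          rw [hGθl, Nlamd, abs_of_nonneg (by positivity), sq]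
          field_simp
        rwa [e] at h
      · exact ciSup_le termle
  calc ‖θ‖ = ⨆ v : {v : Yd // (v : Y) ≠ 0},
      |G θ (((v : Yd) : Yd) : Y)| / N (v : Yd) := hgoal
    _ = _ := by
      apply iSup_congr
      intro v
      rw [key2 (v : Yd)]
end

section
/- Oscillation bound: with Π^δ the Fortin projector satisfying ‖G' Π^δ (G')⁻¹‖_{L(X',X')} = 1/γ^δ, it holds that osc^δ(f) := ‖G⁻¹(Id − Π^δ)' f‖_X ≤ (1/γ^δ) · inf over w^δ ∈ X^δ of ‖u − w^δ‖_X, where u = G⁻¹ f. -/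
open NormedSpace

/-- Kato's inequality for idempotent operators on a real inner product space:
`‖x - P x‖ ≤ ‖P‖ ‖x‖`. -/
lemma kato_pointwise {H : Type*} [NormedAddCommGroup H] [InnerProductSpace ℝ H]
    (P : H →L[ℝ] H) (hP : ∀ x, P (P x) = P x) (h1 : (1:ℝ) ≤ ‖P‖) (x : H) :
    ‖x - P x‖ ≤ ‖P‖ * ‖x‖ := by
  set v := x - P x with hv
  rcases eq_or_ne v 0 with hb | hb
  · rw [hb, norm_zero]; positivity
  have hPv : P v = 0 := by rw [hv, map_sub, hP, sub_self]
  have hbpos : (0:ℝ) < ‖v‖^2 := pow_pos (norm_pos_iff.mpr hb) 2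
  set a := ‖x‖^2 with ha
  set b := ‖v‖^2 with hbdef
  set c := (inner ℝ x v : ℝ) with hc
  set k := ‖P‖^2 with hk
  have hknn : (0:ℝ) ≤ k := by positivity
  have hPxv : P (x - (c/b) • v) = P x := by
    rw [map_sub, map_smul, hPv, smul_zero, sub_zero]
  have key : ‖P x‖ ≤ ‖P‖ * ‖x - (c/b) • v‖ := by
    rw [← hPxv]; exact P.le_opNorm _
  have hnx : ‖x - (c/b) • v‖^2 = a - c^2 / b := by
    rw [norm_sub_sq_real, real_inner_smul_right, norm_smul, Real.norm_eq_abs, mul_pow, sq_abs]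
    rw [← hc, ← ha, ← hbdef]
    field_simp
    ring
  have hPxeq : P x = x - v := by rw [hv, sub_sub_cancel]
  have hE : ‖P x‖^2 = a - 2*c + b := by
    rw [hPxeq, norm_sub_sq_real, ← hc, ← ha, ← hbdef]
  have key2 : ‖P x‖^2 ≤ k * (a - c^2/b) := by
    rw [hk, ← hnx]
    nlinarith [key, norm_nonneg (P x), norm_nonneg (x - (c/b) • v), P.opNorm_nonneg]
  set E := a - 2*c + b with hEdef
  have hEnn : 0 ≤ E := hE ▸ sq_nonneg ‖P x‖
  have hEb : E * b ≤ k * (a*b - c^2) := by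
    have h5 : (k*(a - c^2/b)) * b = k * (a*b - c^2) := by field_simp
    have h7 : ‖P x‖^2 * b ≤ (k*(a - c^2/b)) * b := mul_le_mul_of_nonneg_right key2 hbpos.le
    have h8 : E * b = ‖P x‖^2 * b := by rw [hE]
    linarith
  have hD : a*b - c^2 ≤ a * E := by nlinarith [sq_nonneg (a - c)]
  rcases eq_or_lt_of_le hEnn with hE0 | hE0
  · -- E = 0 : then P x = 0, so v = x
    have hPx0 : P x = 0 := by
      have : ‖P x‖^2 = 0 := by rw [hE, ← hE0]
      simpa [pow_eq_zero_iff] using this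
    have hvx : v = x := by rw [hv, hPx0, sub_zero]
    rw [hvx]
    nlinarith [norm_nonneg x]
  · have hba : b ≤ k * a := by
      have h6 : b * E ≤ (k * a) * E := by nlinarith [mul_le_mul_of_nonneg_left hD hknn, hEb]
      exact le_of_mul_le_mul_right h6 hE0
    have hsq : ‖x - P x‖^2 ≤ (‖P‖ * ‖x‖)^2 := by
      rw [mul_pow, ← hk, ← ha]; exact hba
    exact (pow_le_pow_iff_left₀ (norm_nonneg _)
      (mul_nonneg P.opNorm_nonneg (norm_nonneg x)) two_ne_zero).mp hsq

/-- Oscillation bound: with `Π^δ` the Fortin projector satisfying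
`‖G' Π^δ (G')⁻¹‖ = 1/γ^δ`, it holds that `osc^δ(f) ≤ (1/γ^δ) inf_{w^δ∈X^δ} ‖u − w^δ‖_X`. -/
theorem oscillation_bound
    {X Y : Type*}
    [NormedAddCommGroup X] [InnerProductSpace ℝ X] [CompleteSpace X]
    [NormedAddCommGroup Y] [InnerProductSpace ℝ Y] [CompleteSpace Y]
    (G : X ≃L[ℝ] StrongDual ℝ Y) (f : StrongDual ℝ Y) (u : X) (hu : u = G.symm f)
    (Gp : Y ≃L[ℝ] StrongDual ℝ X)
    (hGp : ∀ (v : Y) (x : X), Gp v x = G x v)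
    (Xd : Submodule ℝ X) (Yd : Submodule ℝ Y)
    (hXdclosed : IsClosed (Xd : Set X)) (hYdclosed : IsClosed (Yd : Set Y))
    -- Π^δ is a projector onto Y^δ ...
    (Pid : Y →L[ℝ] Y) (hPidran : ∀ v : Y, Pid v ∈ Yd) (hPidproj : ∀ v : Yd, Pid v = v)
    -- ... with the Fortin property
    (hFortin : ∀ (w : Xd) (v : Y), G ((w : Xd) : X) (v - Pid v) = 0)
    (γd : ℝ) (hγpos : 0 < γd)
    (hnorm : ‖(Gp : Y →L[ℝ] StrongDual ℝ X).comp (Pid.comp (Gp.symm : StrongDual ℝ X →L[ℝ] Y))‖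
        = 1 / γd) :
    ‖G.symm (f.comp (ContinuousLinearMap.id ℝ Y - Pid))‖
      ≤ (1 / γd) * ⨅ w : Xd, ‖u - (w : X)‖ := by
  have hγ' : (0:ℝ) < 1/γd := by positivity
  set A := (Gp : Y →L[ℝ] StrongDual ℝ X).comp (Pid.comp (Gp.symm : StrongDual ℝ X →L[ℝ] Y)) with hA
  set B : X →L[ℝ] X :=
    ((G.symm : StrongDual ℝ Y →L[ℝ] X).comp
      (((ContinuousLinearMap.compL ℝ Y Y ℝ).flip Pid).comp (G : X →L[ℝ] StrongDual ℝ Y))) with hBdef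
  have hBapp : ∀ x : X, B x = G.symm ((G x).comp Pid) := fun x => rfl
  have hGB : ∀ (x : X) (v : Y), G (B x) v = G x (Pid v) := by
    intro x v
    rw [hBapp, G.apply_symm_apply]
    rfl
  have hduality : ∀ (h : StrongDual ℝ X) (x : X), h (B x) = A h x := by
    intro h x
    have h1 : h (B x) = Gp (Gp.symm h) (B x) := by rw [Gp.apply_symm_apply]
    rw [h1, hGp, hGB, ← hGp]
    rfl
  have hBB : ∀ x, B (B x) = B x := by
    intro x
    have hc : (G (B x)).comp Pid = (G x).comp Pid := by
      ext v
      simp only [ContinuousLinearMap.comp_apply]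
      rw [hGB]
      congr 1
      exact hPidproj ⟨Pid v, hPidran v⟩
    rw [hBapp (B x), hc, ← hBapp]
  have hBnorm : ‖B‖ ≤ 1/γd := by
    refine B.opNorm_le_bound hγ'.le (fun x => ?_)
    rcases eq_or_ne (B x) 0 with h0 | h0
    · rw [h0, norm_zero]; positivity
    · set h := InnerProductSpace.toDual ℝ X (B x) with hh
      have h2 : h (B x) = ‖B x‖^2 := by
        rw [hh, InnerProductSpace.toDual_apply_apply, real_inner_self_eq_norm_sq]
      have h3 : ‖h‖ = ‖B x‖ := by rw [hh]; exact (InnerProductSpace.toDual ℝ X).norm_map _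
      have h4 : A h x ≤ ‖A‖ * ‖h‖ * ‖x‖ := by
        calc A h x ≤ ‖A h x‖ := le_abs_self _
          _ ≤ ‖A‖ * ‖h‖ * ‖x‖ := A.le_opNorm₂ h x
      have h5 : ‖B x‖^2 ≤ (1/γd) * ‖B x‖ * ‖x‖ := by
        rw [← h2, hduality]
        rw [hnorm, h3] at h4
        exact h4
      have h6 : 0 < ‖B x‖ := norm_pos_iff.mpr h0
      nlinarith
  have hAne : A ≠ 0 := by
    intro h0
    rw [h0] at hnorm
    rw [ContinuousLinearMap.opNorm_zero] at hnorm
    exact absurd hnorm.symm (ne_of_gt hγ')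
  have hBne : B ≠ 0 := by
    intro h0
    apply hAne
    ext h x
    rw [← hduality, h0]
    simp
  have h1B : (1:ℝ) ≤ ‖B‖ := by
    obtain ⟨x, hx⟩ : ∃ x, B x ≠ 0 := by
      by_contra hc
      push_neg at hc
      exact hBne (ContinuousLinearMap.ext fun x => by simp [hc x])
    have hle := B.le_opNorm (B x)
    rw [hBB] at hle
    have hxpos : 0 < ‖B x‖ := norm_pos_iff.mpr hx
    nlinarith
  have hf : f = G u := by rw [hu, G.apply_symm_apply]
  have hkey : ∀ w : Xd, G.symm (f.comp (ContinuousLinearMap.id ℝ Y - Pid))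
      = (u - (w:X)) - B (u - (w:X)) := by
    intro w
    rw [ContinuousLinearEquiv.symm_apply_eq]
    ext v
    have hFw := hFortin w v
    have hGw : G (w:X) v - G (w:X) (Pid v) = 0 := by
      rw [← map_sub]; exact hFw
    simp only [ContinuousLinearMap.comp_apply, ContinuousLinearMap.sub_apply,
      ContinuousLinearMap.id_apply, map_sub]
    rw [hGB, hGB, hf]
    linarith [hGw]
  have hle : ∀ w : Xd, ‖G.symm (f.comp (ContinuousLinearMap.id ℝ Y - Pid))‖
      ≤ (1/γd) * ‖u - (w:X)‖ := by
    intro w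
    rw [hkey w]
    calc ‖(u - (w:X)) - B (u - (w:X))‖ ≤ ‖B‖ * ‖u - (w:X)‖ :=
          kato_pointwise B hBB h1B _
      _ ≤ (1/γd) * ‖u - (w:X)‖ := mul_le_mul_of_nonneg_right hBnorm (norm_nonneg _)
  haveI : Nonempty Xd := ⟨0⟩
  rw [one_div_mul_eq_div, le_div_iff₀ hγpos]
  refine le_ciInf (fun w => ?_)
  have := hle w
  rw [one_div_mul_eq_div, le_div_iff₀ hγpos] at this
  exact this
end

section
/- Nonintrusive approach error bound: let G = (F, T) ∈ Lis(X, Y₁' × Y₂'), u = G⁻¹(f, g), X^δ ⊂ X with X₀^δ := X^δ ∩ ker T. Suppose g^δ = T v^δ for some v^δ ∈ X^δ, and z^δ ∈ X₀^δ satisfies ‖z − z^δ‖_X ≤ C inf over w ∈ X₀^δ of ‖z − w‖_X, where z ∈ ker T solves G z = (f − F v^δ, 0). Then ‖u − (z^δ + v^δ)‖_X ≤ C · inf over {w ∈ X^δ : T w = g^δ} of ‖u − w‖_X + (1 + C) ‖G⁻¹‖ · ‖g − g^δ‖_{Y₂'}. -/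
open NormedSpace

/-- Nonintrusive approach error bound:
`‖u − (z^δ + v^δ)‖ ≤ C inf_{Tw = g^δ} ‖u − w‖ + (1+C)‖G⁻¹‖‖g − g^δ‖`. -/
theorem nonintrusive_error_bound
    {X Y1 Y2 : Type*}
    [NormedAddCommGroup X] [InnerProductSpace ℝ X] [CompleteSpace X]
    [NormedAddCommGroup Y1] [InnerProductSpace ℝ Y1] [CompleteSpace Y1]
    [NormedAddCommGroup Y2] [InnerProductSpace ℝ Y2] [CompleteSpace Y2]
    (F : X →L[ℝ] StrongDual ℝ Y1) (T : X →L[ℝ] StrongDual ℝ Y2)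
    (G : X ≃L[ℝ] (StrongDual ℝ Y1 × StrongDual ℝ Y2))
    (hG : ∀ x : X, G x = (F x, T x))
    (f : StrongDual ℝ Y1) (g : StrongDual ℝ Y2)
    (u : X) (hu : u = G.symm (f, g))
    (Xd : Submodule ℝ X) (hXdclosed : IsClosed (Xd : Set X))
    (C : ℝ) (hC : 0 < C)
    (vd : Xd) (gd : StrongDual ℝ Y2) (hgd : T ((vd : Xd) : X) = gd)
    (z : X) (hz : z = G.symm (f - F ((vd : Xd) : X), 0))
    (zd : Xd) (hzd0 : T ((zd : Xd) : X) = 0)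
    (hzdopt : ‖z - (zd : X)‖
      ≤ C * ⨅ w : ↥(Xd ⊓ LinearMap.ker (T : X →ₗ[ℝ] StrongDual ℝ Y2)), ‖z - (w : X)‖) :
    ‖u - ((zd : X) + (vd : X))‖
      ≤ C * (⨅ w : {w : Xd // T ((w : Xd) : X) = gd}, ‖u - (((w : {w : Xd // T ((w : Xd) : X) = gd}) : Xd) : X)‖)
        + (1 + C) * ‖(G.symm : (StrongDual ℝ Y1 × StrongDual ℝ Y2) →L[ℝ] X)‖ * ‖g - gd‖ := by

  classical
  set Gs : (StrongDual ℝ Y1 × StrongDual ℝ Y2) →L[ℝ] X :=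
    (G.symm : (StrongDual ℝ Y1 × StrongDual ℝ Y2) →L[ℝ] X) with hGs
  set K : ℝ := ‖Gs‖ * ‖g - gd‖ with hKdef
  have hK0 : 0 ≤ K := by positivity
  have key : u - (z + (vd : X)) = G.symm (0, g - gd) := by
    have hGu : G u = (f, g) := by rw [hu]; exact G.apply_symm_apply _
    have hGz : G z = (f - F (vd : X), 0) := by rw [hz]; exact G.apply_symm_apply _
    have hGv : G (vd : X) = (F (vd : X), gd) := by rw [hG, hgd]
    have h : G (u - (z + (vd : X))) = (0, g - gd) := by
      rw [map_sub, map_add, hGu, hGz, hGv]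
      refine Prod.ext ?_ ?_ <;> simp <;> abel
    rw [← h, G.symm_apply_apply]
  have hkeyK : ‖u - (z + (vd : X))‖ ≤ K := by
    rw [key]
    calc ‖G.symm (0, g - gd)‖ = ‖Gs (0, g - gd)‖ := rfl
      _ ≤ ‖Gs‖ * ‖((0 : StrongDual ℝ Y1), g - gd)‖ := Gs.le_opNorm _
      _ = K := by
          rw [hKdef]
          congr 1
          rw [Prod.norm_def]
          simp
  -- infima
  set I0 : ℝ := ⨅ w : ↥(Xd ⊓ LinearMap.ker (T : X →ₗ[ℝ] StrongDual ℝ Y2)), ‖z - (w : X)‖ with hI0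
  set Ia : ℝ := ⨅ w : {w : Xd // T ((w : Xd) : X) = gd},
      ‖u - (((w : {w : Xd // T ((w : Xd) : X) = gd}) : Xd) : X)‖ with hIa
  have hbdd : BddBelow (Set.range fun w : ↥(Xd ⊓ LinearMap.ker (T : X →ₗ[ℝ] StrongDual ℝ Y2)) => ‖z - (w : X)‖) :=
    ⟨0, by rintro x ⟨w, rfl⟩; exact norm_nonneg _⟩
  have hstep : ∀ w : {w : Xd // T ((w : Xd) : X) = gd},
      I0 ≤ ‖u - ((w : Xd) : X)‖ + K := by
    intro w
    have hmem : ((w : Xd) : X) - (vd : X) ∈ Xd ⊓ LinearMap.ker (T : X →ₗ[ℝ] StrongDual ℝ Y2) := by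
      refine Submodule.mem_inf.mpr ⟨Submodule.sub_mem _ (w : Xd).2 vd.2, ?_⟩
      rw [LinearMap.mem_ker]
      have : T (((w : Xd) : X) - (vd : X)) = T ((w : Xd) : X) - T (vd : X) := map_sub T _ _
      rw [ContinuousLinearMap.coe_coe, this, w.2, hgd, sub_self]
    have hle : I0 ≤ ‖z - (((w : Xd) : X) - (vd : X))‖ :=
      ciInf_le hbdd (⟨_, hmem⟩ : ↥(Xd ⊓ LinearMap.ker (T : X →ₗ[ℝ] StrongDual ℝ Y2)))
    have heq : z - (((w : Xd) : X) - (vd : X)) = (z + (vd : X) - u) + (u - ((w : Xd) : X)) := by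
      abel
    calc I0 ≤ ‖z - (((w : Xd) : X) - (vd : X))‖ := hle
      _ ≤ ‖z + (vd : X) - u‖ + ‖u - ((w : Xd) : X)‖ := by rw [heq]; exact norm_add_le _ _
      _ ≤ K + ‖u - ((w : Xd) : X)‖ := by
          have : ‖z + (vd : X) - u‖ = ‖u - (z + (vd : X))‖ := by rw [← norm_neg]; congr 1; abel
          rw [this]; exact add_le_add_left hkeyK _
      _ = ‖u - ((w : Xd) : X)‖ + K := by ring
  have hI0Ia : I0 ≤ Ia + K := by
    haveI : Nonempty {w : Xd // T ((w : Xd) : X) = gd} := ⟨⟨vd, hgd⟩⟩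
    have : I0 - K ≤ Ia := le_ciInf fun w => by linarith [hstep w]
    linarith
  have htri : ‖u - ((zd : X) + (vd : X))‖ ≤ ‖u - (z + (vd : X))‖ + ‖z - (zd : X)‖ := by
    have heq : u - ((zd : X) + (vd : X)) = (u - (z + (vd : X))) + (z - (zd : X)) := by abel
    rw [heq]; exact norm_add_le _ _
  have hCmul : C * I0 ≤ C * (Ia + K) := mul_le_mul_of_nonneg_left hI0Ia hC.le
  calc ‖u - ((zd : X) + (vd : X))‖
      ≤ ‖u - (z + (vd : X))‖ + ‖z - (zd : X)‖ := htri
    _ ≤ K + C * I0 := add_le_add hkeyK hzdopt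
    _ ≤ K + C * (Ia + K) := by linarith
    _ = C * Ia + (1 + C) * K := by ring
    _ = C * Ia + (1 + C) * ‖Gs‖ * ‖g - gd‖ := by rw [hKdef]; ring
end
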